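/- arXiv:1809.01224 — 10 statements merged into one kernel-verified Lean document; each statement's English description precedes it below -/
import Mathlib

section
/- Let D ≥ 2. Let k be the real Lie algebra with basis {J_{ab} = −J_{ba} (1 ≤ a < b ≤ D), B_a, P_a (1 ≤ a ≤ D), H} and nonzero brackets [J_{ab},J_{cd}] = δ_{bc}J_{ad} − δ_{ac}J_{bd} − δ_{bd}J_{ac} + δ_{ad}J_{bc}, [J_{ab},B_c] = δ_{bc}B_a − δ_{ac}B_b, [J_{ab},P_c] = δ_{bc}P_a − δ_{ac}P_b, [H,B_a] = B_a, [H,P_a] = −P_a, [B_a,P_b] = δ_{ab}H + J_{ab}, and let h ⊆ k be the subalgebra spanned by {J_{ab}, B_a}. Then the Lie pair (k,h) is not reductive: there is no linear subspace m ⊆ k with k = h ⊕ m (as vector spaces) and [h,m] ⊆ m. -/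
namespace Stmt3

/-- Kronecker delta. -/
def kron {n : ℕ} (a b : Fin n) : ℝ := if a = b then 1 else 0

/-- The family `{J_{ab} (a < b), B_a, P_a, H}`, indexing a basis of a kinematical Lie
algebra. -/
def kinFam {L : Type*} {D : ℕ} (J : Fin D → Fin D → L) (B P : Fin D → L) (H : L) :
    ({p : Fin D × Fin D // p.1 < p.2} ⊕ (Fin D ⊕ (Fin D ⊕ Unit))) → L :=
  Sum.elim (fun p => J p.1.1 p.1.2) (Sum.elim B (Sum.elim P fun _ => H))

/-- The subalgebra `h` spanned by the `J_{ab}` and the `B_a`. -/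
def hSpan {L : Type*} [AddCommGroup L] [Module ℝ L] {D : ℕ}
    (J : Fin D → Fin D → L) (B : Fin D → L) : Submodule ℝ L :=
  Submodule.span ℝ ((Set.range fun p : Fin D × Fin D => J p.1 p.2) ∪ Set.range B)

end Stmt3

open Stmt3 in
/-- Let `k` be the kinematical Lie algebra (isomorphic to `so(D+1,1)`, `D ≥ 2`) with basis
`{J_{ab}, B_a, P_a, H}` and nonzero brackets `[J,J]`, `[J,B]`, `[J,P]` as usual and
`[H,B_a] = B_a`, `[H,P_a] = −P_a`, `[B_a,P_b] = δ_{ab}H + J_{ab}`, and let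
`h = span{J_{ab}, B_a}`.  Then the Lie pair `(k,h)` is not reductive: there is no
complement `m` of `h` in `k` with `[h,m] ⊆ m`. -/
theorem stmt3 {D : ℕ} (hD : 2 ≤ D) {L : Type*} [LieRing L] [LieAlgebra ℝ L]
    (J : Fin D → Fin D → L) (B P : Fin D → L) (H : L)
    (hJskew : ∀ a b, J a b = -J b a)
    (hindep : LinearIndependent ℝ (kinFam J B P H))
    (hspan : Submodule.span ℝ (Set.range (kinFam J B P H)) = ⊤)
    (hJJ : ∀ a b c d, ⁅J a b, J c d⁆ =
        kron b c • J a d - kron a c • J b d - kron b d • J a c + kron a d • J b c)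
    (hJB : ∀ a b c, ⁅J a b, B c⁆ = kron b c • B a - kron a c • B b)
    (hJP : ∀ a b c, ⁅J a b, P c⁆ = kron b c • P a - kron a c • P b)
    (hJH : ∀ a b, ⁅J a b, H⁆ = 0)
    (hHB : ∀ a, ⁅H, B a⁆ = B a)
    (hHP : ∀ a, ⁅H, P a⁆ = -P a)
    (hBB : ∀ a b, ⁅B a, B b⁆ = 0)
    (hPP : ∀ a b, ⁅P a, P b⁆ = 0)
    (hBP : ∀ a b, ⁅B a, P b⁆ = kron a b • H + J a b) :
    ¬ ∃ m : Submodule ℝ L, IsCompl (hSpan J B) m ∧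
        ∀ X ∈ hSpan J B, ∀ Y ∈ m, ⁅X, Y⁆ ∈ m := by
  rintro ⟨m, hcompl, hred⟩
  have a : Fin D := ⟨0, by omega⟩
  -- basis of L
  let b : Module.Basis _ ℝ L := Module.Basis.mk hindep (le_of_eq hspan.symm)
  let f : L →ₗ[ℝ] ℝ := b.coord (Sum.inr (Sum.inl a))
  have hb : ∀ i, b i = kinFam J B P H i := fun i => Module.Basis.mk_apply hindep _ i
  have hfB : ∀ c, f (B c) = if c = a then 1 else 0 := by
    intro c
    have hc : B c = b (Sum.inr (Sum.inl c)) := by rw [hb]; rfl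
    rw [hc]
    simp [f, Module.Basis.coord_apply, Module.Basis.repr_self, Finsupp.single_apply]
  have hmemB : ∀ c, B c ∈ hSpan J B :=
    fun c => Submodule.subset_span (Or.inr ⟨c, rfl⟩)
  have hmemJ : ∀ c d, J c d ∈ hSpan J B :=
    fun c d => Submodule.subset_span (Or.inl ⟨(c, d), rfl⟩)
  -- bracket with B a stays in h and kills f
  have key : ∀ X ∈ hSpan J B, ⁅B a, X⁆ ∈ hSpan J B ∧ f ⁅B a, X⁆ = 0 := by
    intro X hX
    refine Submodule.span_induction ?_ ?_ ?_ ?_ hX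
    · rintro x (⟨p, rfl⟩ | ⟨c, rfl⟩)
      · have h1 : ⁅B a, J p.1 p.2⁆ = kron p.1 a • B p.2 - kron p.2 a • B p.1 := by
          rw [← lie_skew, hJB, neg_sub]
        constructor
        · rw [h1]
          exact Submodule.sub_mem _ (Submodule.smul_mem _ _ (hmemB _))
            (Submodule.smul_mem _ _ (hmemB _))
        · rw [h1]
          simp only [map_sub, map_smul, hfB, smul_eq_mul, kron]
          split_ifs <;> ring
      · rw [hBB]
        exact ⟨Submodule.zero_mem _, by simp⟩
    · rw [lie_zero]; exact ⟨Submodule.zero_mem _, by simp⟩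
    · intro x y _ _ hx hy
      rw [lie_add]
      exact ⟨Submodule.add_mem _ hx.1 hy.1, by rw [map_add, hx.2, hy.2, add_zero]⟩
    · intro r x _ hx
      rw [lie_smul]
      exact ⟨Submodule.smul_mem _ _ hx.1, by rw [map_smul, hx.2, smul_zero]⟩
  -- decompose H
  obtain ⟨X, hXh, Y, hYm, hXY⟩ : ∃ X ∈ hSpan J B, ∃ Y ∈ m, X + Y = H := by
    have : H ∈ hSpan J B ⊔ m := by rw [hcompl.sup_eq_top]; trivial
    exact Submodule.mem_sup.mp this
  have hbY : ⁅B a, Y⁆ = -B a - ⁅B a, X⁆ := by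
    have : ⁅B a, H⁆ = -B a := by rw [← lie_skew, hHB]
    have h2 : ⁅B a, X⁆ + ⁅B a, Y⁆ = -B a := by rw [← lie_add, hXY, this]
    exact eq_sub_of_add_eq' h2
  have hmemm : ⁅B a, Y⁆ ∈ m := hred _ (hmemB a) _ hYm
  have hmemh : ⁅B a, Y⁆ ∈ hSpan J B := by
    rw [hbY]
    exact Submodule.sub_mem _ (Submodule.neg_mem _ (hmemB a)) (key X hXh).1
  have hzero : ⁅B a, Y⁆ = 0 := by
    have := hcompl.disjoint
    exact (Submodule.disjoint_def.mp this) _ hmemh hmemm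
  have h0 : (0 : L) = -B a - ⁅B a, X⁆ := by rw [← hzero, hbY]
  have h3 : B a + ⁅B a, X⁆ = 0 := by
    rw [sub_eq_add_neg, ← neg_add] at h0
    exact neg_eq_zero.mp h0.symm
  have : f (B a) = 0 := by
    have h4 := congrArg f h3
    rwa [map_add, (key X hXh).2, add_zero, map_zero] at h4
  rw [hfB] at this
  simp at this
end

section
/- Let D ≥ 2 and let (k,h) be the light-cone Lie pair: k is the real Lie algebra with basis {J_{ab}, B_a, P_a, H} and nonzero brackets [J_{ab},J_{cd}] = δ_{bc}J_{ad} − δ_{ac}J_{bd} − δ_{bd}J_{ac} + δ_{ad}J_{bc}, [J_{ab},B_c] = δ_{bc}B_a − δ_{ac}B_b, [J_{ab},P_c] = δ_{bc}P_a − δ_{ac}P_b, [H,B_a] = B_a, [H,P_a] = −P_a, [B_a,P_b] = δ_{ab}H + J_{ab}, and h = span{J_{ab}, B_a}. Let λ: h → End(k/h) be the linear isotropy representation, λ_X(Y + h) = [X,Y] + h. Then there exists NO linear map Λ: k → End(k/h) satisfying both (i) Λ_X = λ_X for all X ∈ h, and (ii) λ_Z ∘ Λ_X − Λ_X ∘ λ_Z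 = Λ_{[Z,X]} for all Z ∈ h and X ∈ k. In other words, the homogeneous spacetime LC admits no invariant affine connection when D ≥ 2. -/
namespace Stmt4

/-- Kronecker delta. -/
def kron {n : ℕ} (a b : Fin n) : ℝ := if a = b then 1 else 0

/-- The family `{J_{ab} (a < b), B_a, P_a, H}`, indexing a basis of a kinematical Lie
algebra. -/
def kinFam {L : Type*} {D : ℕ} (J : Fin D → Fin D → L) (B P : Fin D → L) (H : L) :
    ({p : Fin D × Fin D // p.1 < p.2} ⊕ (Fin D ⊕ (Fin D ⊕ Unit))) → L :=
  Sum.elim (fun p => J p.1.1 p.1.2) (Sum.elim B (Sum.elim P fun _ => H))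

/-- The subalgebra `h` spanned by the `J_{ab}` and the `B_a`. -/
def hSpan {L : Type*} [AddCommGroup L] [Module ℝ L] {D : ℕ}
    (J : Fin D → Fin D → L) (B : Fin D → L) : Submodule ℝ L :=
  Submodule.span ℝ ((Set.range fun p : Fin D × Fin D => J p.1 p.2) ∪ Set.range B)

end Stmt4

open Stmt4 in
/-- Let `(k,h)` be the light-cone Lie pair in `D ≥ 2`: `k` has basis `{J_{ab}, B_a, P_a, H}`
with nonzero brackets `[J,J]`, `[J,B]`, `[J,P]` as usual and `[H,B_a] = B_a`,
`[H,P_a] = −P_a`, `[B_a,P_b] = δ_{ab}H + J_{ab}`, and `h = span{J_{ab}, B_a}`.  Then there is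
no linear map `Λ : k → End(k/h)` restricting on `h` to the linear isotropy representation
`λ_X(Ȳ) = [X,Y] + h` and satisfying the `h`-equivariance condition
`λ_Z ∘ Λ_X − Λ_X ∘ λ_Z = Λ_{[Z,X]}` for all `Z ∈ h`, `X ∈ k`: the homogeneous spacetime `LC`
admits no invariant affine connection when `D ≥ 2`. -/
theorem stmt4 {D : ℕ} (hD : 2 ≤ D) {L : Type*} [LieRing L] [LieAlgebra ℝ L]
    (J : Fin D → Fin D → L) (B P : Fin D → L) (H : L)
    (hJskew : ∀ a b, J a b = -J b a)
    (hindep : LinearIndependent ℝ (kinFam J B P H))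
    (hspan : Submodule.span ℝ (Set.range (kinFam J B P H)) = ⊤)
    (hJJ : ∀ a b c d, ⁅J a b, J c d⁆ =
        kron b c • J a d - kron a c • J b d - kron b d • J a c + kron a d • J b c)
    (hJB : ∀ a b c, ⁅J a b, B c⁆ = kron b c • B a - kron a c • B b)
    (hJP : ∀ a b c, ⁅J a b, P c⁆ = kron b c • P a - kron a c • P b)
    (hJH : ∀ a b, ⁅J a b, H⁆ = 0)
    (hHB : ∀ a, ⁅H, B a⁆ = B a)
    (hHP : ∀ a, ⁅H, P a⁆ = -P a)
    (hBB : ∀ a b, ⁅B a, B b⁆ = 0)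
    (hPP : ∀ a b, ⁅P a, P b⁆ = 0)
    (hBP : ∀ a b, ⁅B a, P b⁆ = kron a b • H + J a b) :
    ¬ ∃ Λ : L →ₗ[ℝ] Module.End ℝ (L ⧸ hSpan J B),
        (∀ X ∈ hSpan J B, ∀ Y : L,
          Λ X (Submodule.Quotient.mk Y) = Submodule.Quotient.mk ⁅X, Y⁆) ∧
        (∀ Z ∈ hSpan J B, ∀ X Y : L,
          Λ Z (Λ X (Submodule.Quotient.mk Y)) - Λ X (Submodule.Quotient.mk ⁅Z, Y⁆)
            = Λ ⁅Z, X⁆ (Submodule.Quotient.mk Y)) := by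

  rintro ⟨Λ, h1, h2⟩
  have hDpos : 1 < D := by omega
  set a : Fin D := ⟨0, by omega⟩ with ha
  set b : Fin D := ⟨1, by omega⟩ with hb
  have hab : a ≠ b := by simp [ha, hb, Fin.ext_iff]
  have hba0 : kron b a = 0 := if_neg (fun h => hab h.symm)
  have kaa : kron a a = 1 := if_pos rfl
  set i0 : ({p : Fin D × Fin D // p.1 < p.2} ⊕ (Fin D ⊕ (Fin D ⊕ Unit))) :=
    Sum.inr (Sum.inr (Sum.inl b)) with hi0
  set s : Set ({p : Fin D × Fin D // p.1 < p.2} ⊕ (Fin D ⊕ (Fin D ⊕ Unit))) := {i0}ᶜ with hs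
  set M : Submodule ℝ L := Submodule.span ℝ (kinFam J B P H '' s) with hM
  have hJmem : ∀ x y : Fin D, J x y ∈ M := by
    intro x y
    rcases lt_trichotomy x y with h | h | h
    · exact Submodule.subset_span ⟨Sum.inl ⟨(x, y), h⟩, by simp [hs, hi0], rfl⟩
    · subst h
      have hsk := hJskew x x
      have h2' : (2 : ℝ) • J x x = 0 := by
        rw [two_smul]; nth_rewrite 2 [hsk]; exact add_neg_cancel _
      have h0 : J x x = 0 := (smul_eq_zero.mp h2').resolve_left two_ne_zero
      rw [h0]; exact zero_mem M
    · rw [hJskew x y]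
      exact neg_mem (Submodule.subset_span ⟨Sum.inl ⟨(y, x), h⟩, by simp [hs, hi0], rfl⟩)
  have hBmem : ∀ x : Fin D, B x ∈ M :=
    fun x => Submodule.subset_span ⟨Sum.inr (Sum.inl x), by simp [hs, hi0], rfl⟩
  have hHmem : H ∈ M :=
    Submodule.subset_span ⟨Sum.inr (Sum.inr (Sum.inr ())), by simp [hs, hi0], rfl⟩
  have hsub : hSpan J B ≤ M := by
    rw [hSpan, Submodule.span_le]
    rintro x (⟨p, rfl⟩ | ⟨c, rfl⟩)
    · exact hJmem p.1 p.2
    · exact hBmem c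
  have hBbh : B b ∈ hSpan J B := Submodule.subset_span (Or.inr ⟨b, rfl⟩)
  have hJbah : J b a ∈ hSpan J B := Submodule.subset_span (Or.inl ⟨(b, a), rfl⟩)
  have hbr : ∀ W : L, ⁅B b, W⁆ ∈ M := by
    intro W
    have hWmem : W ∈ Submodule.span ℝ (Set.range (kinFam J B P H)) := by
      rw [hspan]; trivial
    induction hWmem using Submodule.span_induction with
    | mem x hx =>
        obtain ⟨i, rfl⟩ := hx
        rcases i with ⟨⟨c, d⟩, hcd⟩ | c | c | u
        · show ⁅B b, J c d⁆ ∈ M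
          rw [← lie_skew, hJB]
          exact neg_mem (sub_mem (Submodule.smul_mem _ _ (hBmem c))
            (Submodule.smul_mem _ _ (hBmem d)))
        · show ⁅B b, B c⁆ ∈ M
          rw [hBB]; exact zero_mem M
        · show ⁅B b, P c⁆ ∈ M
          rw [hBP]
          exact add_mem (Submodule.smul_mem _ _ hHmem) (hJmem b c)
        · show ⁅B b, H⁆ ∈ M
          rw [← lie_skew, hHB]
          exact neg_mem (hBmem b)
    | zero => rw [lie_zero]; exact zero_mem M
    | add x y hx hy ihx ihy => rw [lie_add]; exact add_mem ihx ihy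
    | smul r x hx ihx => rw [lie_smul]; exact Submodule.smul_mem _ _ ihx
  obtain ⟨W, hW⟩ := Submodule.Quotient.mk_surjective (hSpan J B)
    (Λ (P a) (Submodule.Quotient.mk (P a)))
  have key := h2 (B b) hBbh (P a) (P a)
  have hbp : ⁅B b, P a⁆ = J b a := by
    rw [hBP b a, hba0, zero_smul, zero_add]
  have hmkJ : (Submodule.Quotient.mk (J b a) : L ⧸ hSpan J B) = 0 :=
    (Submodule.Quotient.mk_eq_zero _).mpr hJbah
  rw [hbp, hmkJ, map_zero, sub_zero, ← hW, h1 (B b) hBbh W,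
    h1 (J b a) hJbah (P a), hJP b a a] at key
  have keq : kron a a • P b - kron b a • P a = P b := by
    rw [kaa, hba0, one_smul, zero_smul, sub_zero]
  rw [keq] at key
  have hdiff : ⁅B b, W⁆ - P b ∈ hSpan J B := (Submodule.Quotient.eq _).mp key
  have hPb : P b ∈ M := by
    have heq : P b = ⁅B b, W⁆ - (⁅B b, W⁆ - P b) := by abel
    rw [heq]
    exact sub_mem (hbr W) (hsub hdiff)
  exact hindep.notMem_span_image (x := i0) (by simp [hs]) hPb
end

section
/- Let k be the 3-dimensional real Lie algebra with basis {H, B, P} and brackets [H,B] = B, [H,P] = −P, [B,P] = H, and let h = ℝB. Write H̄, P̄ for the images of H, P in k/h, so {H̄, P̄} is a basis of k/h, and let λ: h → End(k/h) be the linear isotropy representation, so λ_B H̄ = 0 and λ_B P̄ = H̄. Then a linear map Λ: k → End(k/h) with Λ_B = λ_B satisfies the invariance condition λ_B ∘ Λ_X − Λ_X ∘ λ_B = Λ_{[B,X]} for all X ∈ k if and only if there exist real numbers β, γ, δ such that Λ_H H̄ = (1/2)H̄, Λ_H P̄ = βH̄ − (1/2)P̄, Λ_P H̄ = γH̄ +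 (1/2)P̄, and Λ_P P̄ = δH̄ + (β+γ)P̄. Hence the invariant affine connections on this Lie pair form a three-parameter family. -/
/-- Let `k` be the 3-dimensional real Lie algebra with basis `{H, B, P}` and brackets
`[H,B] = B`, `[H,P] = −P`, `[B,P] = H` (the `D = 1` light-cone Lie pair, `k ≅ sl(2,ℝ)`),
and let `h = ℝB`.  A linear map `Λ : k → End(k/h)` with `Λ_B = λ_B` (the linear isotropy
representation) satisfies the invariance condition `λ_B ∘ Λ_X − Λ_X ∘ λ_B = Λ_{[B,X]}` for
all `X ∈ k` if and only if there are `β, γ, δ ∈ ℝ` with `Λ_H H̄ = (1/2)H̄`,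
`Λ_H P̄ = βH̄ − (1/2)P̄`, `Λ_P H̄ = γH̄ + (1/2)P̄` and `Λ_P P̄ = δH̄ + (β+γ)P̄`.
Hence the invariant affine connections form a three-parameter family. -/
theorem stmt5 {L : Type*} [LieRing L] [LieAlgebra ℝ L] (H B P : L)
    (hindep : LinearIndependent ℝ ![H, B, P])
    (hspan : Submodule.span ℝ {H, B, P} = ⊤)
    (hHB : ⁅H, B⁆ = B) (hHP : ⁅H, P⁆ = -P) (hBP : ⁅B, P⁆ = H)
    (Λ : L →ₗ[ℝ] Module.End ℝ (L ⧸ Submodule.span ℝ {B}))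
    (hΛB : ∀ Y : L, Λ B (Submodule.Quotient.mk Y) = Submodule.Quotient.mk ⁅B, Y⁆) :
    (∀ X Y : L,
        Λ B (Λ X (Submodule.Quotient.mk Y)) - Λ X (Submodule.Quotient.mk ⁅B, Y⁆)
          = Λ ⁅B, X⁆ (Submodule.Quotient.mk Y)) ↔
      ∃ β γ δ : ℝ,
        Λ H (Submodule.Quotient.mk H) = (1 / 2 : ℝ) • Submodule.Quotient.mk H ∧
        Λ H (Submodule.Quotient.mk P) =
          β • Submodule.Quotient.mk H - (1 / 2 : ℝ) • Submodule.Quotient.mk P ∧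
        Λ P (Submodule.Quotient.mk H) =
          γ • Submodule.Quotient.mk H + (1 / 2 : ℝ) • Submodule.Quotient.mk P ∧
        Λ P (Submodule.Quotient.mk P) =
          δ • Submodule.Quotient.mk H + (β + γ) • Submodule.Quotient.mk P := by
  have hmkB : (Submodule.Quotient.mk B : L ⧸ Submodule.span ℝ {B}) = 0 := by
    rw [Submodule.Quotient.mk_eq_zero]; exact Submodule.mem_span_singleton_self B
  have hBH : ⁅B, H⁆ = -B := by rw [← lie_skew, hHB]
  have hΛBh : Λ B (Submodule.Quotient.mk H) = 0 := by
    rw [hΛB, hBH]; simp [hmkB]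
  have hΛBp : Λ B (Submodule.Quotient.mk P) = Submodule.Quotient.mk H := by
    rw [hΛB, hBP]
  have hrepr : ∀ v : L ⧸ Submodule.span ℝ {B}, ∃ a b : ℝ,
      v = a • Submodule.Quotient.mk H + b • Submodule.Quotient.mk P := by
    intro v
    obtain ⟨y, rfl⟩ := Submodule.Quotient.mk_surjective _ v
    have hy : y ∈ Submodule.span ℝ ({H, B, P} : Set L) := hspan ▸ Submodule.mem_top
    rw [Submodule.mem_span_insert] at hy
    obtain ⟨a, z, hz, rfl⟩ := hy
    rw [Submodule.mem_span_insert] at hz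
    obtain ⟨b, w, hw, rfl⟩ := hz
    rw [Submodule.mem_span_singleton] at hw
    obtain ⟨c, rfl⟩ := hw
    exact ⟨a, c, by simp [Submodule.Quotient.mk_add, Submodule.Quotient.mk_smul, hmkB]⟩
  have huniq : ∀ a b : ℝ, a • (Submodule.Quotient.mk H : L ⧸ Submodule.span ℝ {B})
      + b • Submodule.Quotient.mk P = 0 → a = 0 ∧ b = 0 := by
    intro a b hab
    have hmem : a • H + b • P ∈ Submodule.span ℝ ({B} : Set L) := by
      rw [← Submodule.Quotient.mk_eq_zero]
      simpa [Submodule.Quotient.mk_add, Submodule.Quotient.mk_smul] using hab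
    rw [Submodule.mem_span_singleton] at hmem
    obtain ⟨c, hc⟩ := hmem
    have h0 : a • H + -(c • B) + b • P = 0 := by rw [hc]; abel
    have hg := Fintype.linearIndependent_iff.mp hindep ![a, -c, b] (by
      simpa [Fin.sum_univ_three, neg_smul] using h0)
    exact ⟨hg 0, hg 2⟩
  have huniq2 : ∀ a b a' b' : ℝ,
      a • (Submodule.Quotient.mk H : L ⧸ Submodule.span ℝ {B}) + b • Submodule.Quotient.mk P
        = a' • Submodule.Quotient.mk H + b' • Submodule.Quotient.mk P → a = a' ∧ b = b' := by
    intro a b a' b' hE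
    have h0 : (a - a') • (Submodule.Quotient.mk H : L ⧸ Submodule.span ℝ {B})
        + (b - b') • Submodule.Quotient.mk P = 0 := by
      have h1 : (a - a') • (Submodule.Quotient.mk H : L ⧸ Submodule.span ℝ {B})
          + (b - b') • Submodule.Quotient.mk P
          = (a • Submodule.Quotient.mk H + b • Submodule.Quotient.mk P)
            - (a' • Submodule.Quotient.mk H + b' • Submodule.Quotient.mk P) := by
        rw [sub_smul, sub_smul]; abel
      rw [h1, hE, sub_self]
    obtain ⟨h1, h2⟩ := huniq _ _ h0
    constructor <;> linarith
  constructor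
  · intro hcond
    obtain ⟨a, b, hab⟩ := hrepr (Λ H (Submodule.Quotient.mk H))
    obtain ⟨c, d, hcd⟩ := hrepr (Λ H (Submodule.Quotient.mk P))
    obtain ⟨e, f, hef⟩ := hrepr (Λ P (Submodule.Quotient.mk H))
    obtain ⟨g, k, hgk⟩ := hrepr (Λ P (Submodule.Quotient.mk P))
    have e1 := hcond H H
    rw [hab, hBH] at e1
    simp only [map_add, map_smul, map_neg, map_zero, LinearMap.neg_apply,
      Submodule.Quotient.mk_neg, hmkB, neg_zero, hΛBh, hΛBp, smul_zero, zero_add,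
      add_zero, sub_zero] at e1
    -- e1 : b • mk H = 0
    have e2 := hcond H P
    rw [hcd, hBP, hab, hBH] at e2
    simp only [map_add, map_smul, map_neg, map_zero, LinearMap.neg_apply,
      Submodule.Quotient.mk_neg, hmkB, neg_zero, hΛBh, hΛBp, smul_zero, zero_add,
      add_zero, sub_zero] at e2
    have e3 := hcond P H
    rw [hef, hBH, hBP, hab] at e3
    simp only [map_add, map_smul, map_neg, map_zero, LinearMap.neg_apply,
      Submodule.Quotient.mk_neg, hmkB, neg_zero, hΛBh, hΛBp, smul_zero, zero_add,
      add_zero, sub_zero] at e3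
    have e4 := hcond P P
    rw [hgk, hBP, hef, hcd] at e4
    simp only [map_add, map_smul, map_neg, map_zero, LinearMap.neg_apply,
      Submodule.Quotient.mk_neg, hmkB, neg_zero, hΛBh, hΛBp, smul_zero, zero_add,
      add_zero, sub_zero] at e4
    obtain ⟨hb, -⟩ := huniq2 b 0 0 0 (by linear_combination (norm := module) e1)
    obtain ⟨hd, hb'⟩ := huniq2 (d - a) (-b) (-1) 0 (by linear_combination (norm := module) e2)
    obtain ⟨hf, hb''⟩ := huniq2 f 0 a b (by linear_combination (norm := module) e3)
    obtain ⟨hk, hf'⟩ := huniq2 (k - e) (-f) c d (by linear_combination (norm := module) e4)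
    have ha : a = 1 / 2 := by linarith
    have hd2 : d = -(1 / 2) := by linarith
    have hf2 : f = 1 / 2 := by linarith
    have hk2 : k = c + e := by linarith
    refine ⟨c, e, g, ?_, ?_, ?_, ?_⟩
    · rw [hab, ha, hb]; simp
    · rw [hcd, hd2]; module
    · rw [hef, hf2]
    · rw [hgk, hk2]
  · rintro ⟨β, γ, δ, h1, h2, h3, h4⟩
    have main : ∀ X : L, ∀ v : L ⧸ Submodule.span ℝ {B},
        Λ B (Λ X v) - Λ X (Λ B v) = Λ ⁅B, X⁆ v := by
      intro X0
      have hX : X0 ∈ Submodule.span ℝ ({H, B, P} : Set L) := hspan ▸ Submodule.mem_top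
      induction hX using Submodule.span_induction with
      | mem x hx =>
        intro v
        obtain ⟨a, b, rfl⟩ := hrepr v
        simp only [Set.mem_insert_iff, Set.mem_singleton_iff] at hx
        rcases hx with rfl | rfl | rfl
        · simp only [map_add, map_smul, h1, h2, hΛBh, hΛBp, hBH, map_neg,
            LinearMap.neg_apply, smul_add, smul_sub, map_sub, smul_zero, zero_add,
            add_zero, neg_zero, sub_zero]
          module
        · simp [lie_self]
        · simp only [map_add, map_smul, h3, h4, hΛBh, hΛBp, hBP, h1, h2, smul_add,
            smul_sub, map_sub, smul_zero, zero_add, add_zero, sub_zero]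
          module
      | zero => intro v; simp
      | add x y hx hy ihx ihy =>
        intro v
        simp only [map_add, LinearMap.add_apply, lie_add]
        rw [← ihx v, ← ihy v]; abel
      | smul r x hx ihx =>
        intro v
        simp only [map_smul, LinearMap.smul_apply, lie_smul]
        rw [← ihx v, smul_sub]
    intro X Y
    have hm := main X (Submodule.Quotient.mk Y)
    rw [hΛB Y] at hm
    exact hm
end

section
/- Let k be the 3-dimensional real Lie algebra with basis {H, B, P} and brackets [H,B] = B, [H,P] = −P, [B,P] = H, let h = ℝB, and write H̄, P̄ for the images of H, P in k/h. For an invariant connection Λ: k → End(k/h) (i.e., Λ_B equals the linear isotropy representation and Λ is h-equivariant), define its torsion Θ(X̄,Ȳ) := Λ_X Ȳ − Λ_Y X̄ − ([X,Y] + h) and its curvature Ω(X̄,Ȳ) := Λ_X ∘ Λ_Y − Λ_Y ∘ Λ_X − Λ_{[X,Y]} ∈ End(k/h) (both well defined). Then there is a UNIQUE invariant connection with Θ = 0 and Ω = 0, namely the one given by Λ_H H̄ = (1/2)H̄, Λ_H P̄ = −(1/2)P̄, Λ_P H̄ = (1/2)P̄, Λ_P P̄ = 0. -/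
namespace Stmt6

/-- The conditions for `Λ : k → End(k/ℝB)` to be a flat, torsion-free invariant affine
connection on the `D = 1` light-cone Lie pair: `Λ_B` is the linear isotropy representation,
`Λ` is `h`-equivariant, and the torsion `Θ(X̄,Ȳ) = Λ_X Ȳ − Λ_Y X̄ − mk[X,Y]` and curvature
`Ω(X̄,Ȳ) = Λ_X ∘ Λ_Y − Λ_Y ∘ Λ_X − Λ_{[X,Y]}` vanish. -/
def IsFlatTorsionFreeInvariantConnection {L : Type*} [LieRing L] [LieAlgebra ℝ L]
    (B : L) (Λ : L →ₗ[ℝ] Module.End ℝ (L ⧸ Submodule.span ℝ {B})) : Prop :=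
  (∀ Y : L, Λ B (Submodule.Quotient.mk Y) = Submodule.Quotient.mk ⁅B, Y⁆) ∧
  (∀ X Y : L,
    Λ B (Λ X (Submodule.Quotient.mk Y)) - Λ X (Submodule.Quotient.mk ⁅B, Y⁆)
      = Λ ⁅B, X⁆ (Submodule.Quotient.mk Y)) ∧
  (∀ X Y : L,
    Λ X (Submodule.Quotient.mk Y) - Λ Y (Submodule.Quotient.mk X)
      - Submodule.Quotient.mk ⁅X, Y⁆ = 0) ∧
  (∀ X Y Z : L,
    Λ X (Λ Y (Submodule.Quotient.mk Z)) - Λ Y (Λ X (Submodule.Quotient.mk Z))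
      - Λ ⁅X, Y⁆ (Submodule.Quotient.mk Z) = 0)

end Stmt6

set_option maxHeartbeats 2000000 in
open Stmt6 in
/-- Let `k` be the 3-dimensional real Lie algebra with basis `{H, B, P}` and brackets
`[H,B] = B`, `[H,P] = −P`, `[B,P] = H`, and `h = ℝB`.  There is a UNIQUE invariant
connection on `(k,h)` with vanishing torsion and curvature, namely the one given by
`Λ_H H̄ = (1/2)H̄`, `Λ_H P̄ = −(1/2)P̄`, `Λ_P H̄ = (1/2)P̄`, `Λ_P P̄ = 0`. -/
theorem stmt6 {L : Type*} [LieRing L] [LieAlgebra ℝ L] (H B P : L)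
    (hindep : LinearIndependent ℝ ![H, B, P])
    (hspan : Submodule.span ℝ {H, B, P} = ⊤)
    (hHB : ⁅H, B⁆ = B) (hHP : ⁅H, P⁆ = -P) (hBP : ⁅B, P⁆ = H) :
    (∃! Λ : L →ₗ[ℝ] Module.End ℝ (L ⧸ Submodule.span ℝ {B}),
        IsFlatTorsionFreeInvariantConnection B Λ) ∧
    (∀ Λ : L →ₗ[ℝ] Module.End ℝ (L ⧸ Submodule.span ℝ {B}),
      IsFlatTorsionFreeInvariantConnection B Λ →
        Λ H (Submodule.Quotient.mk H) = (1 / 2 : ℝ) • Submodule.Quotient.mk H ∧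
        Λ H (Submodule.Quotient.mk P) = -((1 / 2 : ℝ) • Submodule.Quotient.mk P) ∧
        Λ P (Submodule.Quotient.mk H) = (1 / 2 : ℝ) • Submodule.Quotient.mk P ∧
        Λ P (Submodule.Quotient.mk P) = 0) := by
  classical
  have hrange3 : Set.range ![H, B, P] = {H, B, P} := by
    ext w; simp [Matrix.range_cons, Matrix.range_empty]; tauto
  obtain ⟨bL, bL0, bL1, bL2⟩ : ∃ b : Module.Basis (Fin 3) ℝ L, b 0 = H ∧ b 1 = B ∧ b 2 = P :=
    ⟨Module.Basis.mk hindep (by rw [hrange3, hspan]), by simp [Module.Basis.mk_apply],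
      by simp [Module.Basis.mk_apply], by simp [Module.Basis.mk_apply]⟩
  have decompL : ∀ X : L, ∃ a b c : ℝ, X = a • H + b • B + c • P := by
    intro X
    refine ⟨bL.repr X 0, bL.repr X 1, bL.repr X 2, ?_⟩
    have h := bL.sum_repr X
    rw [Fin.sum_univ_three, bL0, bL1, bL2] at h
    exact h.symm
  -- quotient facts
  have qB : (Submodule.Quotient.mk B : L ⧸ Submodule.span ℝ {B}) = 0 :=
    (Submodule.Quotient.mk_eq_zero _).2 (Submodule.mem_span_singleton_self B)
  have hq_indep : ∀ a c : ℝ,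
      a • (Submodule.Quotient.mk H : L ⧸ Submodule.span ℝ {B}) + c • Submodule.Quotient.mk P = 0
      → a = 0 ∧ c = 0 := by
    intro a c h
    rw [← Submodule.Quotient.mk_smul, ← Submodule.Quotient.mk_smul,
      ← Submodule.Quotient.mk_add, Submodule.Quotient.mk_eq_zero,
      Submodule.mem_span_singleton] at h
    obtain ⟨b, hb⟩ := h
    have hz : a • H + (-b) • B + c • P = 0 := by
      have : a • H + c • P - b • B = 0 := by rw [hb]; abel
      rw [neg_smul]; linear_combination (norm := abel) this
    have h3 := Fintype.linearIndependent_iff.mp hindep ![a, -b, c]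
      (by rw [Fin.sum_univ_three]; simpa using hz)
    exact ⟨h3 0, h3 2⟩
  have decompQ : ∀ v : L ⧸ Submodule.span ℝ {B}, ∃ a c : ℝ,
      v = a • Submodule.Quotient.mk H + c • Submodule.Quotient.mk P := by
    intro v
    obtain ⟨X, rfl⟩ := Submodule.Quotient.mk_surjective _ v
    obtain ⟨a, b, c, rfl⟩ := decompL X
    exact ⟨a, c, by rw [Submodule.Quotient.mk_add, Submodule.Quotient.mk_add,
      Submodule.Quotient.mk_smul, Submodule.Quotient.mk_smul, Submodule.Quotient.mk_smul,
      qB, smul_zero, add_zero]⟩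
  -- quotient basis
  obtain ⟨bQ, bQ0, bQ1⟩ : ∃ b : Module.Basis (Fin 2) ℝ (L ⧸ Submodule.span ℝ {B}),
      b 0 = Submodule.Quotient.mk H ∧ b 1 = Submodule.Quotient.mk P := by
    have hsp : ⊤ ≤ Submodule.span ℝ (Set.range
        ![(Submodule.Quotient.mk H : L ⧸ Submodule.span ℝ {B}), Submodule.Quotient.mk P]) := by
      intro v _
      obtain ⟨a, c, rfl⟩ := decompQ v
      exact add_mem (Submodule.smul_mem _ _ (Submodule.subset_span (by simp)))
        (Submodule.smul_mem _ _ (Submodule.subset_span (by simp)))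
    exact ⟨Module.Basis.mk (LinearIndependent.pair_iff.2 fun s t h => hq_indep s t h) hsp,
      by simp [Module.Basis.mk_apply], by simp [Module.Basis.mk_apply]⟩
  have rH0 : bQ.repr (Submodule.Quotient.mk H) 0 = 1 := by
    rw [← bQ0]; simp
  have rH1 : bQ.repr (Submodule.Quotient.mk H) 1 = 0 := by
    rw [← bQ0]; simp
  have rP0 : bQ.repr (Submodule.Quotient.mk P) 0 = 0 := by
    rw [← bQ1]; simp
  have rP1 : bQ.repr (Submodule.Quotient.mk P) 1 = 1 := by
    rw [← bQ1]; simp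
  -- bracket facts
  have hBH : ⁅B, H⁆ = -B := by rw [← lie_skew, hHB]
  have hPH : ⁅P, H⁆ = P := by rw [← lie_skew, hHP, neg_neg]
  have hPB : ⁅P, B⁆ = -H := by rw [← lie_skew, hBP]
  -- the endomorphisms
  obtain ⟨EH, EH_H, EH_P⟩ : ∃ e : Module.End ℝ (L ⧸ Submodule.span ℝ {B}),
      e (Submodule.Quotient.mk H) = (1/2 : ℝ) • Submodule.Quotient.mk H ∧
      e (Submodule.Quotient.mk P) = -((1/2 : ℝ) • Submodule.Quotient.mk P) :=
    ⟨bQ.constr ℝ ![(1/2 : ℝ) • Submodule.Quotient.mk H,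
        -((1/2 : ℝ) • Submodule.Quotient.mk P)],
      by rw [← bQ0, Module.Basis.constr_basis]; simp [bQ0],
      by rw [← bQ1, Module.Basis.constr_basis]; simp [bQ1]⟩
  obtain ⟨EB, EB_H, EB_P⟩ : ∃ e : Module.End ℝ (L ⧸ Submodule.span ℝ {B}),
      e (Submodule.Quotient.mk H) = 0 ∧
      e (Submodule.Quotient.mk P) = Submodule.Quotient.mk H :=
    ⟨bQ.constr ℝ ![0, Submodule.Quotient.mk H],
      by rw [← bQ0, Module.Basis.constr_basis]; simp,
      by rw [← bQ1, Module.Basis.constr_basis]; simp⟩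
  obtain ⟨EP, EP_H, EP_P⟩ : ∃ e : Module.End ℝ (L ⧸ Submodule.span ℝ {B}),
      e (Submodule.Quotient.mk H) = (1/2 : ℝ) • Submodule.Quotient.mk P ∧
      e (Submodule.Quotient.mk P) = 0 :=
    ⟨bQ.constr ℝ ![(1/2 : ℝ) • Submodule.Quotient.mk P, 0],
      by rw [← bQ0, Module.Basis.constr_basis]; simp [bQ1],
      by rw [← bQ1, Module.Basis.constr_basis]; simp⟩
  have EH_B : EH (Submodule.Quotient.mk B) = 0 := by rw [qB, map_zero]
  have EB_B : EB (Submodule.Quotient.mk B) = 0 := by rw [qB, map_zero]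
  have EP_B : EP (Submodule.Quotient.mk B) = 0 := by rw [qB, map_zero]
  -- the connection
  obtain ⟨Λ₀, ΛH, ΛB, ΛP⟩ : ∃ l : L →ₗ[ℝ] Module.End ℝ (L ⧸ Submodule.span ℝ {B}),
      l H = EH ∧ l B = EB ∧ l P = EP :=
    ⟨bL.constr ℝ ![EH, EB, EP],
      by have h := bL.constr_basis ℝ ![EH, EB, EP] 0; rw [bL0] at h; simpa using h,
      by have h := bL.constr_basis ℝ ![EH, EB, EP] 1; rw [bL1] at h; simpa using h,
      by have h := bL.constr_basis ℝ ![EH, EB, EP] 2; rw [bL2] at h; simpa using h⟩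
  have hconn : IsFlatTorsionFreeInvariantConnection B Λ₀ := by
    refine ⟨?_, ?_, ?_, ?_⟩
    · intro Y
      obtain ⟨d, e, f, rfl⟩ := decompL Y
      simp only [map_add, map_smul, map_neg, map_zero, LinearMap.add_apply,
        LinearMap.smul_apply, LinearMap.neg_apply, LinearMap.sub_apply, LinearMap.zero_apply, lie_add, add_lie, lie_smul, smul_lie, lie_self,
        hHB, hHP, hBP, hBH, hPH, hPB, Submodule.Quotient.mk_add,
        Submodule.Quotient.mk_smul, Submodule.Quotient.mk_neg, qB,
        ΛH, ΛB, ΛP, EH_H, EH_B, EH_P, EB_H, EB_B, EB_P, EP_H, EP_B, EP_P,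
        smul_zero, smul_neg, smul_smul, add_zero, zero_add, neg_zero]
      try module
    · intro X Y
      obtain ⟨a, b, c, rfl⟩ := decompL X
      obtain ⟨d, e, f, rfl⟩ := decompL Y
      simp only [map_add, map_smul, map_neg, map_zero, LinearMap.add_apply,
        LinearMap.smul_apply, LinearMap.neg_apply, LinearMap.sub_apply, LinearMap.zero_apply, lie_add, add_lie, lie_smul, smul_lie, lie_self,
        hHB, hHP, hBP, hBH, hPH, hPB, Submodule.Quotient.mk_add,
        Submodule.Quotient.mk_smul, Submodule.Quotient.mk_neg, qB,
        ΛH, ΛB, ΛP, EH_H, EH_B, EH_P, EB_H, EB_B, EB_P, EP_H, EP_B, EP_P,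
        smul_zero, smul_neg, smul_smul, add_zero, zero_add, neg_zero]
      try module
    · intro X Y
      obtain ⟨a, b, c, rfl⟩ := decompL X
      obtain ⟨d, e, f, rfl⟩ := decompL Y
      simp only [map_add, map_smul, map_neg, map_zero, LinearMap.add_apply,
        LinearMap.smul_apply, LinearMap.neg_apply, LinearMap.sub_apply, LinearMap.zero_apply, lie_add, add_lie, lie_smul, smul_lie, lie_self,
        hHB, hHP, hBP, hBH, hPH, hPB, Submodule.Quotient.mk_add,
        Submodule.Quotient.mk_smul, Submodule.Quotient.mk_neg, qB,
        ΛH, ΛB, ΛP, EH_H, EH_B, EH_P, EB_H, EB_B, EB_P, EP_H, EP_B, EP_P,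
        smul_zero, smul_neg, smul_smul, add_zero, zero_add, neg_zero]
      try module
    · intro X Y Z
      obtain ⟨a, b, c, rfl⟩ := decompL X
      obtain ⟨d, e, f, rfl⟩ := decompL Y
      obtain ⟨g, h, i, rfl⟩ := decompL Z
      simp only [map_add, map_smul, map_neg, map_zero, LinearMap.add_apply,
        LinearMap.smul_apply, LinearMap.neg_apply, LinearMap.sub_apply, LinearMap.zero_apply, lie_add, add_lie, lie_smul, smul_lie, lie_self,
        hHB, hHP, hBP, hBH, hPH, hPB, Submodule.Quotient.mk_add,
        Submodule.Quotient.mk_smul, Submodule.Quotient.mk_neg, qB,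
        ΛH, ΛB, ΛP, EH_H, EH_B, EH_P, EB_H, EB_B, EB_P, EP_H, EP_B, EP_P,
        smul_zero, smul_neg, smul_smul, add_zero, zero_add, neg_zero]
      try module
  -- coordinate functionals
  have cH0 : bQ.coord 0 (Submodule.Quotient.mk H) = 1 := by rw [Module.Basis.coord_apply, rH0]
  have cH1 : bQ.coord 1 (Submodule.Quotient.mk H) = 0 := by rw [Module.Basis.coord_apply, rH1]
  have cP0 : bQ.coord 0 (Submodule.Quotient.mk P) = 0 := by rw [Module.Basis.coord_apply, rP0]
  have cP1 : bQ.coord 1 (Submodule.Quotient.mk P) = 1 := by rw [Module.Basis.coord_apply, rP1]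
  -- any flat torsion-free invariant connection has the stated values
  have values : ∀ Λ : L →ₗ[ℝ] Module.End ℝ (L ⧸ Submodule.span ℝ {B}),
      IsFlatTorsionFreeInvariantConnection B Λ →
      Λ H (Submodule.Quotient.mk H) = (1 / 2 : ℝ) • Submodule.Quotient.mk H ∧
      Λ H (Submodule.Quotient.mk P) = -((1 / 2 : ℝ) • Submodule.Quotient.mk P) ∧
      Λ P (Submodule.Quotient.mk H) = (1 / 2 : ℝ) • Submodule.Quotient.mk P ∧
      Λ P (Submodule.Quotient.mk P) = 0 := by
    rintro Λ ⟨h1, h2, h3, h4⟩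
    have ΛBH : Λ B (Submodule.Quotient.mk H) = 0 := by
      rw [h1 H, hBH, Submodule.Quotient.mk_neg, qB, neg_zero]
    have ΛBP : Λ B (Submodule.Quotient.mk P) = Submodule.Quotient.mk H := by
      rw [h1 P, hBP]
    obtain ⟨a₁, a₂, eHH⟩ := decompQ (Λ H (Submodule.Quotient.mk H))
    obtain ⟨b₁, b₂, eHP⟩ := decompQ (Λ H (Submodule.Quotient.mk P))
    obtain ⟨c₁, c₂, ePH⟩ := decompQ (Λ P (Submodule.Quotient.mk H))
    obtain ⟨d₁, d₂, ePP⟩ := decompQ (Λ P (Submodule.Quotient.mk P))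
    -- E1 : from equivariance at (H, H)
    have E1 := h2 H H
    simp only [hBH, Submodule.Quotient.mk_neg, qB, neg_zero, map_zero, map_neg, map_add,
      map_smul, LinearMap.neg_apply, LinearMap.smul_apply, LinearMap.add_apply,
      eHH, eHP, ePH, ePP, ΛBH, ΛBP, smul_zero, smul_add, smul_neg, smul_smul,
      add_zero, zero_add, sub_zero, zero_sub, neg_neg] at E1
    have E1a := congrArg (fun v => bQ.coord 0 v) E1
    have E1b := congrArg (fun v => bQ.coord 1 v) E1
    simp only [map_add, map_smul, map_neg, map_sub, map_zero, cH0, cH1, cP0, cP1,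
      smul_eq_mul, mul_one, mul_zero, add_zero, zero_add, mul_neg, neg_zero, neg_neg,
      sub_zero, zero_sub] at E1a E1b
    have ha₂ : a₂ = 0 := by linarith
    subst ha₂
    -- E2 : equivariance at (H, P)
    have E2 := h2 H P
    simp only [hBH, hBP, Submodule.Quotient.mk_neg, qB, neg_zero, map_zero, map_neg, map_add,
      map_smul, LinearMap.neg_apply, LinearMap.smul_apply, LinearMap.add_apply,
      eHH, eHP, ePH, ePP, ΛBH, ΛBP, smul_zero, smul_add, smul_neg, smul_smul,
      add_zero, zero_add, sub_zero, zero_sub, neg_neg, zero_smul] at E2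
    have E2a := congrArg (fun v => bQ.coord 0 v) E2
    have E2b := congrArg (fun v => bQ.coord 1 v) E2
    simp only [map_add, map_smul, map_neg, map_sub, map_zero, cH0, cH1, cP0, cP1,
      smul_eq_mul, mul_one, mul_zero, add_zero, zero_add, mul_neg, neg_zero, neg_neg,
      sub_zero, zero_sub] at E2a E2b
    -- E3 : equivariance at (P, H)
    have E3 := h2 P H
    simp only [hBH, hBP, Submodule.Quotient.mk_neg, qB, neg_zero, map_zero, map_neg, map_add,
      map_smul, LinearMap.neg_apply, LinearMap.smul_apply, LinearMap.add_apply,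
      eHH, eHP, ePH, ePP, ΛBH, ΛBP, smul_zero, smul_add, smul_neg, smul_smul,
      add_zero, zero_add, sub_zero, zero_sub, neg_neg, zero_smul] at E3
    have E3a := congrArg (fun v => bQ.coord 0 v) E3
    have E3b := congrArg (fun v => bQ.coord 1 v) E3
    simp only [map_add, map_smul, map_neg, map_sub, map_zero, cH0, cH1, cP0, cP1,
      smul_eq_mul, mul_one, mul_zero, add_zero, zero_add, mul_neg, neg_zero, neg_neg,
      sub_zero, zero_sub] at E3a E3b
    -- E4 : equivariance at (P, P)
    have E4 := h2 P P
    simp only [hBH, hBP, Submodule.Quotient.mk_neg, qB, neg_zero, map_zero, map_neg, map_add,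
      map_smul, LinearMap.neg_apply, LinearMap.smul_apply, LinearMap.add_apply,
      eHH, eHP, ePH, ePP, ΛBH, ΛBP, smul_zero, smul_add, smul_neg, smul_smul,
      add_zero, zero_add, sub_zero, zero_sub, neg_neg, zero_smul] at E4
    have E4a := congrArg (fun v => bQ.coord 0 v) E4
    have E4b := congrArg (fun v => bQ.coord 1 v) E4
    simp only [map_add, map_smul, map_neg, map_sub, map_zero, cH0, cH1, cP0, cP1,
      smul_eq_mul, mul_one, mul_zero, add_zero, zero_add, mul_neg, neg_zero, neg_neg,
      sub_zero, zero_sub] at E4a E4b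
    have ha₁ : a₁ = 1/2 := by linarith
    subst ha₁
    have hb₂ : b₂ = -(1/2) := by linarith
    subst hb₂
    have hc₂ : c₂ = 1/2 := by linarith
    subst hc₂
    -- E5 : torsion at (H, P)
    have E5 := h3 H P
    simp only [hHP, Submodule.Quotient.mk_neg, qB, neg_zero, map_zero, map_neg, map_add,
      map_smul, LinearMap.neg_apply, LinearMap.smul_apply, LinearMap.add_apply,
      eHH, eHP, ePH, ePP, ΛBH, ΛBP, smul_zero, smul_add, smul_neg, smul_smul,
      add_zero, zero_add, sub_zero, zero_sub, neg_neg, zero_smul] at E5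
    have E5a := congrArg (fun v => bQ.coord 0 v) E5
    simp only [map_add, map_smul, map_neg, map_sub, map_zero, cH0, cH1, cP0, cP1,
      smul_eq_mul, mul_one, mul_zero, add_zero, zero_add, mul_neg, neg_zero, neg_neg,
      sub_zero, zero_sub] at E5a
    have hb₁ : b₁ = c₁ := by linarith
    subst hb₁
    -- E6 : curvature at (H, P, H)
    have E6 := h4 H P H
    simp only [hHP, Submodule.Quotient.mk_neg, qB, neg_zero, map_zero, map_neg, map_add,
      map_smul, LinearMap.neg_apply, LinearMap.smul_apply, LinearMap.add_apply,
      eHH, eHP, ePH, ePP, ΛBH, ΛBP, smul_zero, smul_add, smul_neg, smul_smul,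
      add_zero, zero_add, sub_zero, zero_sub, neg_neg, zero_smul] at E6
    have E6a := congrArg (fun v => bQ.coord 0 v) E6
    simp only [map_add, map_smul, map_neg, map_sub, map_zero, cH0, cH1, cP0, cP1,
      smul_eq_mul, mul_one, mul_zero, add_zero, zero_add, mul_neg, neg_zero, neg_neg,
      sub_zero, zero_sub] at E6a
    have hc₁ : b₁ = 0 := by linarith
    subst hc₁
    have hd₂ : d₂ = 0 := by linarith
    subst hd₂
    -- E7 : curvature at (H, P, P)
    have E7 := h4 H P P
    simp only [hHP, Submodule.Quotient.mk_neg, qB, neg_zero, map_zero, map_neg, map_add,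
      map_smul, LinearMap.neg_apply, LinearMap.smul_apply, LinearMap.add_apply,
      eHH, eHP, ePH, ePP, ΛBH, ΛBP, smul_zero, smul_add, smul_neg, smul_smul,
      add_zero, zero_add, sub_zero, zero_sub, neg_neg, zero_smul] at E7
    have E7a := congrArg (fun v => bQ.coord 0 v) E7
    simp only [map_add, map_smul, map_neg, map_sub, map_zero, cH0, cH1, cP0, cP1,
      smul_eq_mul, mul_one, mul_zero, add_zero, zero_add, mul_neg, neg_zero, neg_neg,
      sub_zero, zero_sub] at E7a
    have hd₁ : d₁ = 0 := by linarith
    subst hd₁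
    refine ⟨?_, ?_, ?_, ?_⟩
    · rw [eHH]; module
    · rw [eHP]; module
    · rw [ePH]; module
    · rw [ePP]; module
  refine ⟨⟨Λ₀, hconn, fun Λ' h' => ?_⟩, values⟩
  obtain ⟨vHH, vHP, vPH, vPP⟩ := values Λ' h'
  obtain ⟨wHH, wHP, wPH, wPP⟩ := values Λ₀ hconn
  have eqH : Λ' H = Λ₀ H := by
    apply bQ.ext; intro j; fin_cases j
    · show Λ' H (bQ 0) = Λ₀ H (bQ 0)
      rw [bQ0, vHH, wHH]
    · show Λ' H (bQ 1) = Λ₀ H (bQ 1)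
      rw [bQ1, vHP, wHP]
  have eqB : Λ' B = Λ₀ B := by
    apply bQ.ext; intro j; fin_cases j
    · show Λ' B (bQ 0) = Λ₀ B (bQ 0)
      rw [bQ0, h'.1 H, hconn.1 H]
    · show Λ' B (bQ 1) = Λ₀ B (bQ 1)
      rw [bQ1, h'.1 P, hconn.1 P]
  have eqP : Λ' P = Λ₀ P := by
    apply bQ.ext; intro j; fin_cases j
    · show Λ' P (bQ 0) = Λ₀ P (bQ 0)
      rw [bQ0, vPH, wPH]
    · show Λ' P (bQ 1) = Λ₀ P (bQ 1)
      rw [bQ1, vPP, wPP]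
  apply bL.ext; intro i; fin_cases i
  · show Λ' (bL 0) = Λ₀ (bL 0)
    rw [bL0]; exact eqH
  · show Λ' (bL 1) = Λ₀ (bL 1)
    rw [bL1]; exact eqB
  · show Λ' (bL 2) = Λ₀ (bL 2)
    rw [bL2]; exact eqP
end

section
/- Let D ≥ 1 and γ ∈ ℝ. Let k_γ be the real Lie algebra on so(D) ⊕ ℝ^D ⊕ ℝ^D ⊕ ℝ with basis {J_{ab}, B_a, P_a, H}, nonzero brackets [J_{ab},J_{cd}] = δ_{bc}J_{ad} − δ_{ac}J_{bd} − δ_{bd}J_{ac} + δ_{ad}J_{bc}, [J_{ab},B_c] = δ_{bc}B_a − δ_{ac}B_b, [J_{ab},P_c] = δ_{bc}P_a − δ_{ac}P_b, [H,B_a] = −P_a, [H,P_a] = γB_a + (1+γ)P_a. Set h = span{J_{ab}, B_a} and m = span{P_a, H}. Then (i) k_γ = h ⊕ m with [h,m] ⊆ m (the pair is reductive); (ii) the torsion Θ(X,Y) := −pr_m[X,Y] and curvature Ω(X,Y)Z := −[pr_h[X,Y], Z] (X,Y,Z ∈ m) of the canonical invariant connection are given by Θ(H,P_a) = −(1+γ)P_a,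 Θ(P_a,P_b) = 0, Ω(H,P_a)H = −γP_a, Ω(H,P_a)P_b = 0, Ω(P_a,P_b) = 0; (iii) Θ = 0 if and only if γ = −1, and Ω = 0 if and only if γ = 0. -/
namespace Stmt7Aux

lemma bilin_mem {L : Type*} [LieRing L] [LieAlgebra ℝ L] (S T : Set L) (N : Submodule ℝ L)
    (h : ∀ x ∈ S, ∀ y ∈ T, ⁅x, y⁆ ∈ N) :
    ∀ X ∈ Submodule.span ℝ S, ∀ Y ∈ Submodule.span ℝ T, ⁅X, Y⁆ ∈ N := by
  intro X hX
  induction hX using Submodule.span_induction with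
  | mem x hx =>
    intro Y hY
    induction hY using Submodule.span_induction with
    | mem y hy => exact h x hx y hy
    | zero => simp
    | add y z _ _ hy hz => rw [lie_add]; exact N.add_mem hy hz
    | smul a y _ hy => rw [lie_smul]; exact N.smul_mem a hy
  | zero => intro Y hY; simp
  | add x y _ _ hx hy => intro Y hY; rw [add_lie]; exact N.add_mem (hx Y hY) (hy Y hY)
  | smul a x _ hx => intro Y hY; rw [smul_lie]; exact N.smul_mem a (hx Y hY)

end Stmt7Aux



namespace Stmt7

/-- Kronecker delta. -/
def kron {n : ℕ} (a b : Fin n) : ℝ := if a = b then 1 else 0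

/-- The family `{J_{ab} (a < b), B_a, P_a, H}`, indexing a basis of a kinematical Lie
algebra. -/
def kinFam {L : Type*} {D : ℕ} (J : Fin D → Fin D → L) (B P : Fin D → L) (H : L) :
    ({p : Fin D × Fin D // p.1 < p.2} ⊕ (Fin D ⊕ (Fin D ⊕ Unit))) → L :=
  Sum.elim (fun p => J p.1.1 p.1.2) (Sum.elim B (Sum.elim P fun _ => H))

/-- The subalgebra `h` spanned by the `J_{ab}` and the `B_a`. -/
def hSpan {L : Type*} [AddCommGroup L] [Module ℝ L] {D : ℕ}
    (J : Fin D → Fin D → L) (B : Fin D → L) : Submodule ℝ L :=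
  Submodule.span ℝ ((Set.range fun p : Fin D × Fin D => J p.1 p.2) ∪ Set.range B)

/-- The complement `m` spanned by the `P_a` and `H`. -/
def mSpan {L : Type*} [AddCommGroup L] [Module ℝ L] {D : ℕ}
    (P : Fin D → L) (H : L) : Submodule ℝ L :=
  Submodule.span ℝ (Set.range P ∪ {H})

end Stmt7

open Stmt7 in
/-- Let `k_γ` be the Lie algebra of the torsional galilean de Sitter spacetime `dSG_γ`, with
basis `{J_{ab}, B_a, P_a, H}` and nonzero brackets `[J,J]`, `[J,B]`, `[J,P]` as usual and
`[H,B_a] = −P_a`, `[H,P_a] = γB_a + (1+γ)P_a`; set `h = span{J_{ab}, B_a}` and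
`m = span{P_a, H}`.  Then (i) `k_γ = h ⊕ m` with `[h,m] ⊆ m` (the pair is reductive);
(ii) the torsion `Θ(X,Y) = −pr_m[X,Y]` and curvature `Ω(X,Y)Z = −[pr_h[X,Y],Z]` of the
canonical invariant connection satisfy `Θ(H,P_a) = −(1+γ)P_a`, `Θ(P_a,P_b) = 0`,
`Ω(H,P_a)H = −γP_a`, `Ω(H,P_a)P_b = 0`, `Ω(P_a,P_b) = 0`; and (iii) `Θ = 0` iff `γ = −1`
and `Ω = 0` iff `γ = 0`. -/
theorem stmt7 {D : ℕ} (hD : 1 ≤ D) (γ : ℝ) {L : Type*} [LieRing L] [LieAlgebra ℝ L]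
    (J : Fin D → Fin D → L) (B P : Fin D → L) (H : L)
    (hJskew : ∀ a b, J a b = -J b a)
    (hindep : LinearIndependent ℝ (kinFam J B P H))
    (hspan : Submodule.span ℝ (Set.range (kinFam J B P H)) = ⊤)
    (hJJ : ∀ a b c d, ⁅J a b, J c d⁆ =
        kron b c • J a d - kron a c • J b d - kron b d • J a c + kron a d • J b c)
    (hJB : ∀ a b c, ⁅J a b, B c⁆ = kron b c • B a - kron a c • B b)
    (hJP : ∀ a b c, ⁅J a b, P c⁆ = kron b c • P a - kron a c • P b)
    (hJH : ∀ a b, ⁅J a b, H⁆ = 0)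
    (hHB : ∀ a, ⁅H, B a⁆ = -P a)
    (hHP : ∀ a, ⁅H, P a⁆ = γ • B a + (1 + γ) • P a)
    (hBB : ∀ a b, ⁅B a, B b⁆ = 0)
    (hPP : ∀ a b, ⁅P a, P b⁆ = 0)
    (hBP : ∀ a b, ⁅B a, P b⁆ = 0) :
    (IsCompl (hSpan J B) (mSpan P H) ∧
      ∀ X ∈ hSpan J B, ∀ Y ∈ mSpan P H, ⁅X, Y⁆ ∈ mSpan P H) ∧
    (∀ prh prm : L →ₗ[ℝ] L,
      (∀ X, prh X ∈ hSpan J B) → (∀ X, prm X ∈ mSpan P H) → (∀ X, prh X + prm X = X) →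
        ((∀ a, -prm ⁅H, P a⁆ = (-(1 + γ)) • P a) ∧
         (∀ a b, -prm ⁅P a, P b⁆ = 0) ∧
         (∀ a, -⁅prh ⁅H, P a⁆, H⁆ = (-γ) • P a) ∧
         (∀ a b, -⁅prh ⁅H, P a⁆, P b⁆ = 0) ∧
         (∀ a b, ∀ Z ∈ mSpan P H, -⁅prh ⁅P a, P b⁆, Z⁆ = 0) ∧
         ((∀ X ∈ mSpan P H, ∀ Y ∈ mSpan P H, prm ⁅X, Y⁆ = 0) ↔ γ = -1) ∧
         ((∀ X ∈ mSpan P H, ∀ Y ∈ mSpan P H, ∀ Z ∈ mSpan P H, ⁅prh ⁅X, Y⁆, Z⁆ = 0) ↔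
            γ = 0))) := by
  classical
  -- basic memberships
  have hJmem : ∀ a b, J a b ∈ hSpan J B := fun a b =>
    Submodule.subset_span (Or.inl ⟨(a, b), rfl⟩)
  have hBmem : ∀ a, B a ∈ hSpan J B := fun a => Submodule.subset_span (Or.inr ⟨a, rfl⟩)
  have hPmem : ∀ a, P a ∈ mSpan P H := fun a => Submodule.subset_span (Or.inl ⟨a, rfl⟩)
  have hHmem : H ∈ mSpan P H := Submodule.subset_span (Or.inr rfl)
  have hJaa : ∀ a, J a a = 0 := by
    intro a
    have h := hJskew a a
    have h2 : J a a + J a a = 0 := by nth_rewrite 1 [h]; exact neg_add_cancel (J a a)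
    have h3 : (2 : ℝ) • J a a = 0 := by rw [two_smul]; exact h2
    simpa using smul_eq_zero.mp h3
  -- disjointness via linear independence
  have hdisι : Disjoint
      ((Set.range (Sum.inl : {p : Fin D × Fin D // p.1 < p.2} →
          ({p : Fin D × Fin D // p.1 < p.2} ⊕ (Fin D ⊕ (Fin D ⊕ Unit))))) ∪
        Set.range (fun a : Fin D => (Sum.inr (Sum.inl a) :
          ({p : Fin D × Fin D // p.1 < p.2} ⊕ (Fin D ⊕ (Fin D ⊕ Unit))))))
      ((Set.range (fun a : Fin D => (Sum.inr (Sum.inr (Sum.inl a)) :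
          ({p : Fin D × Fin D // p.1 < p.2} ⊕ (Fin D ⊕ (Fin D ⊕ Unit)))))) ∪
        {Sum.inr (Sum.inr (Sum.inr ()))}) := by
    rw [Set.disjoint_left]
    rintro i (⟨p, rfl⟩ | ⟨a, rfl⟩) hmem <;>
      rcases hmem with ⟨b, h⟩ | h <;> simp at h
  have hHle : hSpan J B ≤ Submodule.span ℝ (kinFam J B P H ''
      ((Set.range Sum.inl) ∪ Set.range (fun a : Fin D => Sum.inr (Sum.inl a)))) := by
    apply Submodule.span_le.mpr
    rintro x (⟨p, rfl⟩ | ⟨a, rfl⟩)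
    · show J p.1 p.2 ∈ _
      rcases lt_trichotomy p.1 p.2 with h | h | h
      · exact Submodule.subset_span ⟨Sum.inl ⟨p, h⟩, Or.inl ⟨⟨p, h⟩, rfl⟩, rfl⟩
      · rw [show p.1 = p.2 from h, hJaa]; exact Submodule.zero_mem _
      · rw [hJskew p.1 p.2]
        exact Submodule.neg_mem _ (Submodule.subset_span
          ⟨Sum.inl ⟨(p.2, p.1), h⟩, Or.inl ⟨⟨(p.2, p.1), h⟩, rfl⟩, rfl⟩)
    · exact Submodule.subset_span ⟨Sum.inr (Sum.inl a), Or.inr ⟨a, rfl⟩, rfl⟩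
  have hMle : mSpan P H ≤ Submodule.span ℝ (kinFam J B P H ''
      ((Set.range (fun a : Fin D => Sum.inr (Sum.inr (Sum.inl a)))) ∪
        {Sum.inr (Sum.inr (Sum.inr ()))})) := by
    apply Submodule.span_le.mpr
    rintro x (⟨a, rfl⟩ | hx)
    · exact Submodule.subset_span ⟨Sum.inr (Sum.inr (Sum.inl a)), Or.inl ⟨a, rfl⟩, rfl⟩
    · rw [Set.mem_singleton_iff] at hx
      subst hx
      exact Submodule.subset_span ⟨Sum.inr (Sum.inr (Sum.inr ())), Or.inr rfl, rfl⟩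
  have hdis : Disjoint (hSpan J B) (mSpan P H) :=
    Disjoint.mono hHle hMle (hindep.disjoint_span_image hdisι)
  have hsup : hSpan J B ⊔ mSpan P H = ⊤ := by
    rw [eq_top_iff, ← hspan]
    apply Submodule.span_le.mpr
    rintro x ⟨i, rfl⟩
    rcases i with p | a | a | u
    · exact Submodule.mem_sup_left (hJmem p.1.1 p.1.2)
    · exact Submodule.mem_sup_left (hBmem a)
    · exact Submodule.mem_sup_right (hPmem a)
    · exact Submodule.mem_sup_right hHmem
  have hcompl : IsCompl (hSpan J B) (mSpan P H) := ⟨hdis, codisjoint_iff.mpr hsup⟩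
  have hBaH : ∀ a, ⁅B a, H⁆ = P a := by
    intro a; rw [← lie_skew, hHB]; simp
  -- reductivity: [h,m] ⊆ m
  have hred : ∀ X ∈ hSpan J B, ∀ Y ∈ mSpan P H, ⁅X, Y⁆ ∈ mSpan P H := by
    apply Stmt7Aux.bilin_mem
    rintro x (⟨p, rfl⟩ | ⟨a, rfl⟩) y (⟨c, rfl⟩ | hy)
    · show ⁅J p.1 p.2, P c⁆ ∈ _
      rw [hJP]
      exact Submodule.sub_mem _ (Submodule.smul_mem _ _ (hPmem _))
        (Submodule.smul_mem _ _ (hPmem _))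
    · rw [Set.mem_singleton_iff] at hy
      rw [hy]
      show ⁅J p.1 p.2, H⁆ ∈ _
      rw [hJH]; exact Submodule.zero_mem _
    · rw [hBP]; exact Submodule.zero_mem _
    · rw [Set.mem_singleton_iff] at hy
      rw [hy, hBaH]; exact hPmem a
  have hPne : ∀ a, P a ≠ 0 := fun a =>
    hindep.ne_zero (Sum.inr (Sum.inr (Sum.inl a)))
  refine ⟨⟨hcompl, hred⟩, ?_⟩
  intro prh prm hprh hprm hsum
  have prm0 : ∀ X ∈ hSpan J B, prm X = 0 := by
    intro X hX
    have h1 : prm X = X - prh X := by rw [eq_sub_iff_add_eq, add_comm]; exact hsum X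
    have h2 : prm X ∈ hSpan J B := h1 ▸ Submodule.sub_mem _ hX (hprh X)
    exact (Submodule.disjoint_def.mp hdis) _ h2 (hprm X)
  have prh0 : ∀ X ∈ mSpan P H, prh X = 0 := by
    intro X hX
    have h1 : prh X = X - prm X := by rw [eq_sub_iff_add_eq]; exact hsum X
    have h2 : prh X ∈ mSpan P H := h1 ▸ Submodule.sub_mem _ hX (hprm X)
    exact (Submodule.disjoint_def.mp hdis) _ (hprh X) h2
  have prmid : ∀ X ∈ mSpan P H, prm X = X := by
    intro X hX
    have := hsum X
    rw [prh0 X hX, zero_add] at this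
    exact this
  have prhid : ∀ X ∈ hSpan J B, prh X = X := by
    intro X hX
    have := hsum X
    rw [prm0 X hX, add_zero] at this
    exact this
  -- key computations
  have prmHP : ∀ a, prm ⁅H, P a⁆ = (1 + γ) • P a := by
    intro a
    rw [hHP, map_add, map_smul, map_smul, prm0 _ (hBmem a), prmid _ (hPmem a), smul_zero,
      zero_add]
  have prhHP : ∀ a, prh ⁅H, P a⁆ = γ • B a := by
    intro a
    rw [hHP, map_add, map_smul, map_smul, prhid _ (hBmem a), prh0 _ (hPmem a), smul_zero,
      add_zero]
  refine ⟨?_, ?_, ?_, ?_, ?_, ?_, ?_⟩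
  · intro a; rw [prmHP, neg_smul]
  · intro a b; rw [hPP, map_zero, neg_zero]
  · intro a; rw [prhHP, smul_lie, hBaH, neg_smul]
  · intro a b; rw [prhHP, smul_lie, hBP, smul_zero, neg_zero]
  · intro a b Z _; rw [hPP, map_zero, zero_lie, neg_zero]
  · constructor
    · intro h
      have h0 := h H hHmem (P ⟨0, hD⟩) (hPmem _)
      rw [prmHP] at h0
      have h1 : (1 + γ) = 0 := by
        rcases smul_eq_zero.mp h0 with h' | h'
        · exact h'
        · exact absurd h' (hPne _)
      linarith
    · intro hγ
      subst hγ
      have key : ∀ X ∈ mSpan P H, ∀ Y ∈ mSpan P H, ⁅X, Y⁆ ∈ hSpan J B := by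
        apply Stmt7Aux.bilin_mem
        rintro x (⟨a, rfl⟩ | hx) y (⟨b, rfl⟩ | hy)
        · rw [hPP]; exact Submodule.zero_mem _
        · rw [Set.mem_singleton_iff] at hy
          rw [hy]
          have : ⁅P a, H⁆ = B a := by
            rw [← lie_skew, hHP]; simp
          rw [this]; exact hBmem a
        · rw [Set.mem_singleton_iff] at hx
          rw [hx, hHP]
          simp only [add_neg_cancel, zero_smul, add_zero, neg_one_smul]
          exact Submodule.neg_mem _ (hBmem b)
        · rw [Set.mem_singleton_iff] at hx hy
          rw [hx, hy, lie_self]; exact Submodule.zero_mem _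
      intro X hX Y hY
      exact prm0 _ (key X hX Y hY)
  · constructor
    · intro h
      have h0 := h H hHmem (P ⟨0, hD⟩) (hPmem _) H hHmem
      rw [prhHP, smul_lie, hBaH] at h0
      rcases smul_eq_zero.mp h0 with h' | h'
      · exact h'
      · exact absurd h' (hPne _)
    · intro hγ
      subst hγ
      have key : ∀ X ∈ mSpan P H, ∀ Y ∈ mSpan P H, ⁅X, Y⁆ ∈ mSpan P H := by
        apply Stmt7Aux.bilin_mem
        rintro x (⟨a, rfl⟩ | hx) y (⟨b, rfl⟩ | hy)
        · rw [hPP]; exact Submodule.zero_mem _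
        · rw [Set.mem_singleton_iff] at hy
          rw [hy]
          have : ⁅P a, H⁆ = -P a := by
            rw [← lie_skew, hHP]; simp
          rw [this]; exact Submodule.neg_mem _ (hPmem a)
        · rw [Set.mem_singleton_iff] at hx
          rw [hx, hHP]; simp only [zero_smul, zero_add, add_zero]
          exact Submodule.smul_mem _ _ (hPmem b)
        · rw [Set.mem_singleton_iff] at hx hy
          rw [hx, hy, lie_self]; exact Submodule.zero_mem _
      intro X hX Y hY Z _
      rw [prh0 _ (key X hX Y hY), zero_lie]
end

section
/- Let D ≥ 1 and χ ∈ ℝ. Let k_χ be the real Lie algebra on so(D) ⊕ ℝ^D ⊕ ℝ^D ⊕ ℝ with basis {J_{ab}, B_a, P_a, H}, nonzero brackets [J_{ab},J_{cd}] = δ_{bc}J_{ad} − δ_{ac}J_{bd} − δ_{bd}J_{ac} + δ_{ad}J_{bc}, [J_{ab},B_c] = δ_{bc}B_a − δ_{ac}B_b, [J_{ab},P_c] = δ_{bc}P_a − δ_{ac}P_b, [H,B_a] = −P_a, [H,P_a] = (1+χ²)B_a + 2χP_a. Set h = span{J_{ab}, B_a} and m = span{P_a, H}. Then (i) k_χ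 = h ⊕ m with [h,m] ⊆ m; (ii) the torsion and curvature of the canonical invariant connection are Θ(H,P_a) = −2χP_a, Θ(P_a,P_b) = 0, Ω(H,P_a)H = −(1+χ²)P_a, Ω(H,P_a)P_b = 0, Ω(P_a,P_b) = 0; (iii) Θ = 0 if and only if χ = 0, while Ω ≠ 0 for every χ ∈ ℝ (the canonical connection is never flat). -/
namespace Stmt8

/-- Kronecker delta. -/
def kron {n : ℕ} (a b : Fin n) : ℝ := if a = b then 1 else 0

/-- The family `{J_{ab} (a < b), B_a, P_a, H}`, indexing a basis of a kinematical Lie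
algebra. -/
def kinFam {L : Type*} {D : ℕ} (J : Fin D → Fin D → L) (B P : Fin D → L) (H : L) :
    ({p : Fin D × Fin D // p.1 < p.2} ⊕ (Fin D ⊕ (Fin D ⊕ Unit))) → L :=
  Sum.elim (fun p => J p.1.1 p.1.2) (Sum.elim B (Sum.elim P fun _ => H))

/-- The subalgebra `h` spanned by the `J_{ab}` and the `B_a`. -/
def hSpan {L : Type*} [AddCommGroup L] [Module ℝ L] {D : ℕ}
    (J : Fin D → Fin D → L) (B : Fin D → L) : Submodule ℝ L :=
  Submodule.span ℝ ((Set.range fun p : Fin D × Fin D => J p.1 p.2) ∪ Set.range B)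

/-- The complement `m` spanned by the `P_a` and `H`. -/
def mSpan {L : Type*} [AddCommGroup L] [Module ℝ L] {D : ℕ}
    (P : Fin D → L) (H : L) : Submodule ℝ L :=
  Submodule.span ℝ (Set.range P ∪ {H})

/-- Auxiliary: a bracket condition on generators extends to spans. -/
lemma aux_bracket {L : Type*} [LieRing L] [LieAlgebra ℝ L] {s t : Set L} {N : Submodule ℝ L}
    (h : ∀ x ∈ s, ∀ y ∈ t, ⁅x, y⁆ ∈ N) :
    ∀ X ∈ Submodule.span ℝ s, ∀ Y ∈ Submodule.span ℝ t, ⁅X, Y⁆ ∈ N := by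
  intro X hX
  induction hX using Submodule.span_induction with
  | mem x hx =>
      intro Y hY
      induction hY using Submodule.span_induction with
      | mem y hy => exact h x hx y hy
      | zero => simp
      | add y z _ _ hy hz => rw [lie_add]; exact N.add_mem hy hz
      | smul r y _ hy => rw [lie_smul]; exact N.smul_mem r hy
  | zero => intro Y hY; simp
  | add x y _ _ hx hy => intro Y hY; rw [add_lie]; exact N.add_mem (hx Y hY) (hy Y hY)
  | smul r x _ hx => intro Y hY; rw [smul_lie]; exact N.smul_mem r (hx Y hY)

end Stmt8

open Stmt8 in
/-- Let `k_χ` be the Lie algebra of the torsional galilean anti de Sitter spacetime `AdSG_χ`,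
with basis `{J_{ab}, B_a, P_a, H}` and nonzero brackets `[J,J]`, `[J,B]`, `[J,P]` as usual and
`[H,B_a] = −P_a`, `[H,P_a] = (1+χ²)B_a + 2χP_a`; set `h = span{J_{ab}, B_a}` and
`m = span{P_a, H}`.  Then (i) `k_χ = h ⊕ m` with `[h,m] ⊆ m`; (ii) the torsion and curvature
of the canonical invariant connection satisfy `Θ(H,P_a) = −2χP_a`, `Θ(P_a,P_b) = 0`,
`Ω(H,P_a)H = −(1+χ²)P_a`, `Ω(H,P_a)P_b = 0`, `Ω(P_a,P_b) = 0`; and (iii) `Θ = 0` iff `χ = 0`,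
while `Ω ≠ 0` for every `χ` (the canonical connection is never flat). -/
theorem stmt8 {D : ℕ} (hD : 1 ≤ D) (χ : ℝ) {L : Type*} [LieRing L] [LieAlgebra ℝ L]
    (J : Fin D → Fin D → L) (B P : Fin D → L) (H : L)
    (hJskew : ∀ a b, J a b = -J b a)
    (hindep : LinearIndependent ℝ (kinFam J B P H))
    (hspan : Submodule.span ℝ (Set.range (kinFam J B P H)) = ⊤)
    (hJJ : ∀ a b c d, ⁅J a b, J c d⁆ =
        kron b c • J a d - kron a c • J b d - kron b d • J a c + kron a d • J b c)
    (hJB : ∀ a b c, ⁅J a b, B c⁆ = kron b c • B a - kron a c • B b)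
    (hJP : ∀ a b c, ⁅J a b, P c⁆ = kron b c • P a - kron a c • P b)
    (hJH : ∀ a b, ⁅J a b, H⁆ = 0)
    (hHB : ∀ a, ⁅H, B a⁆ = -P a)
    (hHP : ∀ a, ⁅H, P a⁆ = (1 + χ ^ 2) • B a + (2 * χ) • P a)
    (hBB : ∀ a b, ⁅B a, B b⁆ = 0)
    (hPP : ∀ a b, ⁅P a, P b⁆ = 0)
    (hBP : ∀ a b, ⁅B a, P b⁆ = 0) :
    (IsCompl (hSpan J B) (mSpan P H) ∧
      ∀ X ∈ hSpan J B, ∀ Y ∈ mSpan P H, ⁅X, Y⁆ ∈ mSpan P H) ∧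
    (∀ prh prm : L →ₗ[ℝ] L,
      (∀ X, prh X ∈ hSpan J B) → (∀ X, prm X ∈ mSpan P H) → (∀ X, prh X + prm X = X) →
        ((∀ a, -prm ⁅H, P a⁆ = (-(2 * χ)) • P a) ∧
         (∀ a b, -prm ⁅P a, P b⁆ = 0) ∧
         (∀ a, -⁅prh ⁅H, P a⁆, H⁆ = (-(1 + χ ^ 2)) • P a) ∧
         (∀ a b, -⁅prh ⁅H, P a⁆, P b⁆ = 0) ∧
         (∀ a b, ∀ Z ∈ mSpan P H, -⁅prh ⁅P a, P b⁆, Z⁆ = 0) ∧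
         ((∀ X ∈ mSpan P H, ∀ Y ∈ mSpan P H, prm ⁅X, Y⁆ = 0) ↔ χ = 0) ∧
         ¬(∀ X ∈ mSpan P H, ∀ Y ∈ mSpan P H, ∀ Z ∈ mSpan P H, ⁅prh ⁅X, Y⁆, Z⁆ = 0))) := by
  -- basic membership facts
  have hJmem : ∀ a b, J a b ∈ hSpan J B := fun a b =>
    Submodule.subset_span (Or.inl ⟨(a, b), rfl⟩)
  have hBmem : ∀ a, B a ∈ hSpan J B := fun a => Submodule.subset_span (Or.inr ⟨a, rfl⟩)
  have hPmem : ∀ a, P a ∈ mSpan P H := fun a => Submodule.subset_span (Or.inl ⟨a, rfl⟩)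
  have hHmem : H ∈ mSpan P H := Submodule.subset_span (Or.inr rfl)
  -- J is zero on the diagonal
  have hJdiag : ∀ a, J a a = 0 := by
    intro a
    have h := hJskew a a
    have h2 : (2 : ℝ) • J a a = 0 := by
      rw [two_smul]
      nth_rewrite 2 [h]
      exact add_neg_cancel _
    rcases smul_eq_zero.mp h2 with h' | h'
    · norm_num at h'
    · exact h'
  -- index sets
  set ι := ({p : Fin D × Fin D // p.1 < p.2} ⊕ (Fin D ⊕ (Fin D ⊕ Unit))) with hι
  have hdisjIdx : Disjoint
      ((Set.range (Sum.inl : _ → ι)) ∪ (Set.range fun a : Fin D => (Sum.inr (Sum.inl a) : ι)))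
      (Set.range fun x : Fin D ⊕ Unit => (Sum.inr (Sum.inr x) : ι)) := by
    rw [Set.disjoint_left]
    rintro i (⟨p, rfl⟩ | ⟨a, rfl⟩) ⟨x, hx⟩ <;> simp at hx
  have hle : hSpan J B ≤ Submodule.span ℝ (kinFam J B P H ''
      ((Set.range (Sum.inl : _ → ι)) ∪ (Set.range fun a : Fin D => (Sum.inr (Sum.inl a) : ι)))) := by
    rw [hSpan, Submodule.span_le]
    rintro x (⟨⟨a, b⟩, rfl⟩ | ⟨a, rfl⟩)
    · show J a b ∈ _
      rcases lt_trichotomy a b with hab | hab | hab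
      · exact Submodule.subset_span ⟨Sum.inl ⟨(a, b), hab⟩, Or.inl ⟨_, rfl⟩, rfl⟩
      · subst hab; simp only [hJdiag]; exact Submodule.zero_mem _
      · rw [hJskew a b]
        exact Submodule.neg_mem _
          (Submodule.subset_span ⟨Sum.inl ⟨(b, a), hab⟩, Or.inl ⟨_, rfl⟩, rfl⟩)
    · exact Submodule.subset_span ⟨Sum.inr (Sum.inl a), Or.inr ⟨a, rfl⟩, rfl⟩
  have mle : mSpan P H ≤ Submodule.span ℝ (kinFam J B P H ''
      (Set.range fun x : Fin D ⊕ Unit => (Sum.inr (Sum.inr x) : ι))) := by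
    rw [mSpan, Submodule.span_le]
    rintro x (⟨a, rfl⟩ | rfl)
    · exact Submodule.subset_span ⟨Sum.inr (Sum.inr (Sum.inl a)), ⟨Sum.inl a, rfl⟩, rfl⟩
    · exact Submodule.subset_span ⟨Sum.inr (Sum.inr (Sum.inr ())), ⟨Sum.inr (), rfl⟩, rfl⟩
  have disj : Disjoint (hSpan J B) (mSpan P H) :=
    Disjoint.mono hle mle (hindep.disjoint_span_image hdisjIdx)
  -- codisjointness
  have codisj : Codisjoint (hSpan J B) (mSpan P H) := by
    rw [codisjoint_iff, eq_top_iff, ← hspan, Submodule.span_le]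
    rintro x ⟨i, rfl⟩
    rcases i with ⟨⟨a, b⟩, hab⟩ | a | a | u
    · exact Submodule.mem_sup_left (hJmem a b)
    · exact Submodule.mem_sup_left (hBmem a)
    · exact Submodule.mem_sup_right (hPmem a)
    · exact Submodule.mem_sup_right hHmem
  -- the reductivity condition [h,m] ⊆ m
  have hred : ∀ X ∈ hSpan J B, ∀ Y ∈ mSpan P H, ⁅X, Y⁆ ∈ mSpan P H := by
    apply aux_bracket
    rintro x (⟨⟨a, b⟩, rfl⟩ | ⟨a, rfl⟩) y (⟨c, rfl⟩ | rfl)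
    · rw [hJP]
      exact Submodule.sub_mem _ (Submodule.smul_mem _ _ (hPmem a))
        (Submodule.smul_mem _ _ (hPmem b))
    · rw [hJH]; exact Submodule.zero_mem _
    · rw [hBP]; exact Submodule.zero_mem _
    · rw [← lie_skew, hHB, neg_neg]; exact hPmem a
  -- nonzero basis vectors
  have hPne : ∀ a, P a ≠ 0 := fun a =>
    hindep.ne_zero (Sum.inr (Sum.inr (Sum.inl a)))
  refine ⟨⟨⟨disj, codisj⟩, hred⟩, ?_⟩
  intro prh prm hprh hprm hsum
  -- uniqueness of the decomposition
  have key : ∀ X x y : L, x ∈ hSpan J B → y ∈ mSpan P H → X = x + y →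
      prh X = x ∧ prm X = y := by
    intro X x y hx hy hXxy
    have h1 : prh X - x = y - prm X := by
      rw [sub_eq_sub_iff_add_eq_add, add_comm y x, ← hXxy]
      exact hsum X
    have hmemh : prh X - x ∈ hSpan J B := Submodule.sub_mem _ (hprh X) hx
    have hmemm : prh X - x ∈ mSpan P H := by
      rw [h1]; exact Submodule.sub_mem _ hy (hprm X)
    have h0 : prh X - x = 0 := Submodule.disjoint_def.mp disj _ hmemh hmemm
    have hh : prh X = x := sub_eq_zero.mp h0
    refine ⟨hh, ?_⟩
    have h2 : (0 : L) = y - prm X := by rw [← h1, hh, sub_self]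
    exact (sub_eq_zero.mp h2.symm).symm
  have hkeyHP : ∀ a, prh ⁅H, P a⁆ = (1 + χ ^ 2) • B a ∧ prm ⁅H, P a⁆ = (2 * χ) • P a :=
    fun a => key _ _ _ (Submodule.smul_mem _ _ (hBmem a))
      (Submodule.smul_mem _ _ (hPmem a)) (hHP a)
  -- prm vanishes on h
  have hprm_h : ∀ z ∈ hSpan J B, prm z = 0 := by
    intro z hz
    have h1 : prm z = z - prh z := by
      have := hsum z; rw [eq_sub_iff_add_eq, add_comm]; exact this
    have hmemh : prm z ∈ hSpan J B := by
      rw [h1]; exact Submodule.sub_mem _ hz (hprh z)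
    exact Submodule.disjoint_def.mp disj _ hmemh (hprm z)
  refine ⟨?_, ?_, ?_, ?_, ?_, ?_, ?_⟩
  · intro a; rw [(hkeyHP a).2, ← neg_smul]
  · intro a b; rw [hPP, map_zero, neg_zero]
  · intro a
    rw [(hkeyHP a).1, smul_lie, ← lie_skew, hHB, neg_neg, ← neg_smul]
  · intro a b; rw [(hkeyHP a).1, smul_lie, hBP, smul_zero, neg_zero]
  · intro a b Z _; rw [hPP, map_zero, zero_lie, neg_zero]
  · constructor
    · intro hall
      have a : Fin D := ⟨0, hD⟩
      have := hall H hHmem (P a) (hPmem a)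
      rw [(hkeyHP a).2] at this
      rcases smul_eq_zero.mp this with h' | h'
      · linarith
      · exact absurd h' (hPne a)
    · intro hχ X hX Y hY
      subst hχ
      have hmm : ∀ X ∈ mSpan P H, ∀ Y ∈ mSpan P H, ⁅X, Y⁆ ∈ hSpan J B := by
        apply aux_bracket
        rintro x (⟨a, rfl⟩ | rfl) y (⟨b, rfl⟩ | rfl)
        · rw [hPP]; exact Submodule.zero_mem _
        · rw [← lie_skew, hHP]
          refine Submodule.neg_mem _ ?_
          refine Submodule.add_mem _ (Submodule.smul_mem _ _ (hBmem a)) ?_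
          rw [mul_zero, zero_smul]; exact Submodule.zero_mem _
        · rw [hHP]
          refine Submodule.add_mem _ (Submodule.smul_mem _ _ (hBmem b)) ?_
          rw [mul_zero, zero_smul]; exact Submodule.zero_mem _
        · rw [lie_self]; exact Submodule.zero_mem _
      exact hprm_h _ (hmm X hX Y hY)
  · intro hflat
    have a : Fin D := ⟨0, hD⟩
    have := hflat H hHmem (P a) (hPmem a) H hHmem
    rw [(hkeyHP a).1, smul_lie, ← lie_skew, hHB, neg_neg] at this
    rcases smul_eq_zero.mp this with h' | h'
    · nlinarith [sq_nonneg χ]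
    · exact absurd h' (hPne a)
end

section
/- Let D ≥ 1 and let V = so(D) ⊕ ℝ^D ⊕ ℝ^D ⊕ ℝ with elements written A + B_u + P_v + cH. Let [·,·] be the bracket of the light-cone presentation of so(D+1,1) on V: [A,A'] = AA' − A'A, [A,B_v] = B_{Av}, [A,P_v] = P_{Av}, [A,H] = 0, [H,B_v] = B_v, [H,P_v] = −P_v, [B_u,P_v] = ⟨u,v⟩H + (uvᵀ − vuᵀ), all other brackets of generators zero. For t ∈ (0,1] define g_t ∈ GL(V) by g_t A = A, g_t B_v = B_v, g_t P_v = tP_v, g_t H = tH, and [X,Y]_t := g_t^{-1}[g_t X, g_t Y]. Then [H,B_v]_t = tB_v, [H,P_v]_t = −tP_v, [B_u,P_v]_t = ⟨u,v⟩H + t(uvᵀ − vuᵀ), and for every X, Y ∈ V the limit lim_{t→0⁺}[X,Y]_t exists and equals the Carroll bracket, whose only nonzero brackets of generators are [A,A'] = AA' − A'A, [A,B_v] = B_{Av}, [A,P_v] = P_{Av}, and [B_u,P_v] = ⟨u,v⟩H. In particular, the Carroll Lie algebra is a contraction of so(D+1,1), corresponding to the limit from the light-cone spacetime LC to the carrollian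 spacetime C. -/
open Matrix

noncomputable section

namespace Stmt11

/-- `so(D)`: the real skew-symmetric `D × D` matrices. -/
def soD (D : ℕ) : Submodule ℝ (Matrix (Fin D) (Fin D) ℝ) where
  carrier := {M | Mᵀ = -M}
  add_mem' := fun {a b} ha hb => by
    simp only [Set.mem_setOf_eq] at ha hb ⊢
    rw [Matrix.transpose_add, ha, hb, neg_add]
  zero_mem' := by simp only [Set.mem_setOf_eq, Matrix.transpose_zero, neg_zero]
  smul_mem' := fun c a ha => by
    simp only [Set.mem_setOf_eq] at ha ⊢
    rw [Matrix.transpose_smul, ha, smul_neg]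

theorem mem_soD {D : ℕ} {M : Matrix (Fin D) (Fin D) ℝ} : M ∈ soD D ↔ Mᵀ = -M := Iff.rfl

/-- The commutator `AA' − A'A` of two skew-symmetric matrices, as an element of `so(D)`. -/
def soComm {D : ℕ} (A B : soD D) : soD D :=
  ⟨A.val * B.val - B.val * A.val, by
    have hA : (A.val)ᵀ = -A.val := A.2
    have hB : (B.val)ᵀ = -B.val := B.2
    rw [mem_soD, Matrix.transpose_sub, Matrix.transpose_mul, Matrix.transpose_mul, hA, hB,
      neg_mul_neg, neg_mul_neg, neg_sub]⟩

/-- `uvᵀ − vuᵀ` as an element of `so(D)`. -/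
def outer {D : ℕ} (u v : Fin D → ℝ) : soD D :=
  ⟨vecMulVec u v - vecMulVec v u, by
    rw [mem_soD]
    ext i j
    simp only [Matrix.transpose_apply, Matrix.sub_apply, Matrix.neg_apply, Matrix.vecMulVec_apply]
    ring⟩

/-- The underlying vector space `V = so(D) ⊕ ℝ^D ⊕ ℝ^D ⊕ ℝ`, an element
`(A, u, v, c)` standing for `A + B_u + P_v + cH`. -/
abbrev KV (D : ℕ) := soD D × (Fin D → ℝ) × (Fin D → ℝ) × ℝ

/-- The bracket of the light-cone presentation of `so(D+1,1)` on `V`: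
`[A,A'] = AA' − A'A`, `[A,B_v] = B_{Av}`, `[A,P_v] = P_{Av}`, `[A,H] = 0`,
`[H,B_v] = B_v`, `[H,P_v] = −P_v`, `[B_u,P_v] = ⟨u,v⟩H + (uvᵀ − vuᵀ)`,
all other brackets of generators zero. -/
def lcBr {D : ℕ} (X Y : KV D) : KV D :=
  (soComm X.1 Y.1 + outer X.2.1 Y.2.2.1 - outer Y.2.1 X.2.2.1,
   X.1.val.mulVec Y.2.1 - Y.1.val.mulVec X.2.1 + X.2.2.2 • Y.2.1 - Y.2.2.2 • X.2.1,
   X.1.val.mulVec Y.2.2.1 - Y.1.val.mulVec X.2.2.1 - X.2.2.2 • Y.2.2.1 + Y.2.2.2 • X.2.2.1,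
   X.2.1 ⬝ᵥ Y.2.2.1 - Y.2.1 ⬝ᵥ X.2.2.1)

/-- The Carroll bracket on `V`: the only nonzero brackets of generators are
`[A,A'] = AA' − A'A`, `[A,B_v] = B_{Av}`, `[A,P_v] = P_{Av}` and `[B_u,P_v] = ⟨u,v⟩H`. -/
def carrollBr {D : ℕ} (X Y : KV D) : KV D :=
  (soComm X.1 Y.1,
   X.1.val.mulVec Y.2.1 - Y.1.val.mulVec X.2.1,
   X.1.val.mulVec Y.2.2.1 - Y.1.val.mulVec X.2.2.1,
   X.2.1 ⬝ᵥ Y.2.2.1 - Y.2.1 ⬝ᵥ X.2.2.1)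

/-- The linear map `g` on `V` which is the identity on `so(D)`, scales the `B`-component by `s`,
the `P`-component by `t`, and the `H`-component by `u`. -/
def gscale {D : ℕ} (s t u : ℝ) (X : KV D) : KV D := (X.1, s • X.2.1, t • X.2.2.1, u * X.2.2.2)

/-- The contracted bracket `[X,Y]_t := g_t⁻¹ [g_t X, g_t Y]`, where `g_t` is the identity
on `so(D)` and on the `B`-component and scales the `P`- and `H`-components by `t`. -/
def contrBr {D : ℕ} (t : ℝ) (X Y : KV D) : KV D :=
  gscale 1 t⁻¹ t⁻¹ (lcBr (gscale 1 t t X) (gscale 1 t t Y))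

end Stmt11


namespace Stmt11Aux
open Stmt11

lemma outer_smul_right {D : ℕ} (t : ℝ) (u v : Fin D → ℝ) :
    outer u (t • v) = t • outer u v := by
  apply Subtype.ext
  show _ = ((t • outer u v : soD D) : Matrix (Fin D) (Fin D) ℝ)
  rw [Submodule.coe_smul]
  ext i j
  simp [outer, Matrix.vecMulVec_apply]
  ring

lemma outer_zero_right {D : ℕ} (u : Fin D → ℝ) : outer u 0 = 0 := by
  apply Subtype.ext; ext i j; simp [outer, Matrix.vecMulVec_apply]

lemma outer_zero_left {D : ℕ} (u : Fin D → ℝ) : outer 0 u = 0 := by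
  apply Subtype.ext; ext i j; simp [outer, Matrix.vecMulVec_apply]

lemma soComm_zero_zero {D : ℕ} : soComm (0 : soD D) 0 = 0 := by
  apply Subtype.ext; simp [soComm]

/-- Explicit form of the contracted bracket for `t ≠ 0`. -/
lemma contrBr_eq {D : ℕ} {t : ℝ} (ht : t ≠ 0) (X Y : KV D) :
    contrBr t X Y =
      (soComm X.1 Y.1 + t • (outer X.2.1 Y.2.2.1 - outer Y.2.1 X.2.2.1),
       X.1.val.mulVec Y.2.1 - Y.1.val.mulVec X.2.1
         + (t * X.2.2.2) • Y.2.1 - (t * Y.2.2.2) • X.2.1,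
       X.1.val.mulVec Y.2.2.1 - Y.1.val.mulVec X.2.2.1
         - (t * X.2.2.2) • Y.2.2.1 + (t * Y.2.2.2) • X.2.2.1,
       X.2.1 ⬝ᵥ Y.2.2.1 - Y.2.1 ⬝ᵥ X.2.2.1) := by
  unfold contrBr gscale lcBr
  refine Prod.ext ?_ (Prod.ext ?_ (Prod.ext ?_ ?_)) <;> dsimp only
  · rw [one_smul, one_smul, outer_smul_right, outer_smul_right, smul_sub]
    abel
  · rw [one_smul, one_smul, one_smul]
  · rw [Matrix.mulVec_smul, Matrix.mulVec_smul]
    ext i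
    simp only [Pi.smul_apply, Pi.add_apply, Pi.sub_apply, smul_eq_mul]
    field_simp
  · rw [dotProduct_smul, dotProduct_smul]
    field_simp
    simp only [one_smul]
    ring

end Stmt11Aux

open Stmt11 in
/-- For the light-cone presentation of `so(D+1,1)`, the contracted brackets satisfy
`[H,B_v]_t = t B_v`, `[H,P_v]_t = −t P_v`, `[B_u,P_v]_t = ⟨u,v⟩H + t(uvᵀ − vuᵀ)`,
and converge, as `t → 0⁺`, to the Carroll bracket.  In particular, the Carroll Lie algebra is a
contraction of `so(D+1,1)`, corresponding to the limit from the light-cone spacetime `LC` to the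
carrollian spacetime `C`. -/
theorem stmt11 (D : ℕ) (hD : 1 ≤ D) :
    (∀ t : ℝ, 0 < t →
      (∀ v : Fin D → ℝ, contrBr t ((0, 0, 0, 1) : KV D) (0, v, 0, 0) = (0, t • v, 0, 0)) ∧
      (∀ v : Fin D → ℝ, contrBr t ((0, 0, 0, 1) : KV D) (0, 0, v, 0) = (0, 0, (-t) • v, 0)) ∧
      (∀ u v : Fin D → ℝ,
        contrBr t ((0, u, 0, 0) : KV D) (0, 0, v, 0) = (t • outer u v, 0, 0, u ⬝ᵥ v))) ∧
    (∀ X Y : KV D,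
      Filter.Tendsto (fun t : ℝ => contrBr t X Y) (nhdsWithin 0 (Set.Ioi 0))
        (nhds (carrollBr X Y))) := by
  constructor
  · intro t ht
    have ht' : t ≠ 0 := ne_of_gt ht
    refine ⟨fun v => ?_, fun v => ?_, fun u v => ?_⟩
    · rw [Stmt11Aux.contrBr_eq ht']
      simp [Stmt11Aux.outer_zero_left, Stmt11Aux.outer_zero_right,
        Stmt11Aux.soComm_zero_zero]
    · rw [Stmt11Aux.contrBr_eq ht']
      simp [Stmt11Aux.outer_zero_left, Stmt11Aux.outer_zero_right,
        Stmt11Aux.soComm_zero_zero, neg_smul]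
    · rw [Stmt11Aux.contrBr_eq ht']
      simp [Stmt11Aux.outer_zero_left, Stmt11Aux.outer_zero_right,
        Stmt11Aux.soComm_zero_zero]
  · intro X Y
    set F : ℝ → KV D := fun t =>
      (soComm X.1 Y.1 + t • (outer X.2.1 Y.2.2.1 - outer Y.2.1 X.2.2.1),
       X.1.val.mulVec Y.2.1 - Y.1.val.mulVec X.2.1
         + (t * X.2.2.2) • Y.2.1 - (t * Y.2.2.2) • X.2.1,
       X.1.val.mulVec Y.2.2.1 - Y.1.val.mulVec X.2.2.1
         - (t * X.2.2.2) • Y.2.2.1 + (t * Y.2.2.2) • X.2.2.1,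
       X.2.1 ⬝ᵥ Y.2.2.1 - Y.2.1 ⬝ᵥ X.2.2.1) with hF
    have hcont : Continuous F := by
      apply Continuous.prodMk
      · exact continuous_const.add (continuous_id.smul continuous_const)
      apply Continuous.prodMk
      · fun_prop
      apply Continuous.prodMk
      · fun_prop
      · exact continuous_const
    have hF0 : F 0 = carrollBr X Y := by
      simp only [hF, zero_smul, add_zero, zero_mul, sub_zero, carrollBr]
    have hEq : (fun t : ℝ => contrBr t X Y) =ᶠ[nhdsWithin 0 (Set.Ioi 0)] F :=
      Filter.eventuallyEq_of_mem self_mem_nhdsWithin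
        (fun t ht => Stmt11Aux.contrBr_eq (ne_of_gt ht) X Y)
    refine Filter.Tendsto.congr' hEq.symm ?_
    rw [← hF0]
    exact (hcont.tendsto 0).mono_left nhdsWithin_le_nhds
end
end

section
/- Let α be an irrational real number and let X ∈ M₃(ℂ) be the diagonal matrix X = diag(i, αi, −(1+α)i). Then (i) exp(tX) belongs to SU(3) for every t ∈ ℝ; (ii) the closure in M₃(ℂ) of the one-parameter subgroup S := {exp(tX) : t ∈ ℝ} equals the maximal torus T := {diag(z₁, z₂, z₃) : z₁, z₂, z₃ ∈ ℂ, |z₁| = |z₂| = |z₃| = 1, z₁z₂z₃ = 1}; and (iii) S ≠ T, so S is NOT a closed subgroup of SU(3). -/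
open Matrix

noncomputable section

namespace Stmt13

/-- The diagonal matrix `X = diag(i, αi, −(1+α)i) ∈ M₃(ℂ)`. -/
def Xmat (α : ℝ) : Matrix (Fin 3) (Fin 3) ℂ :=
  Matrix.diagonal ![Complex.I, (α : ℂ) * Complex.I, -((1 : ℂ) + (α : ℂ)) * Complex.I]

/-- The one-parameter subgroup `S = {exp(tX) : t ∈ ℝ}`. -/
def S (α : ℝ) : Set (Matrix (Fin 3) (Fin 3) ℂ) :=
  {M | ∃ t : ℝ, M = NormedSpace.exp (t • Xmat α)}

/-- The maximal torus `T` of diagonal matrices in `SU(3)`. -/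
def T : Set (Matrix (Fin 3) (Fin 3) ℂ) :=
  {M | ∃ z₁ z₂ z₃ : ℂ, M = Matrix.diagonal ![z₁, z₂, z₃] ∧
    ‖z₁‖ = 1 ∧ ‖z₂‖ = 1 ∧ ‖z₃‖ = 1 ∧ z₁ * z₂ * z₃ = 1}

/-! ### Auxiliary lemmas -/

open Complex Filter

lemma exp_eq (α : ℝ) (t : ℝ) : NormedSpace.exp (t • Xmat α) =
    Matrix.diagonal ![Complex.exp (t * I), Complex.exp (α * t * I),
      Complex.exp (-((1:ℝ) + α) * t * I)] := by
  rw [Xmat, ← Matrix.diagonal_smul, Matrix.exp_diagonal, Pi.exp_def]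
  apply congrArg Matrix.diagonal
  funext i
  rw [Complex.exp_eq_exp_ℂ]
  fin_cases i <;> simp <;> (congr 1; ring)

lemma abs_exp_real_mul_I (x : ℝ) : ‖Complex.exp ((x:ℂ) * I)‖ = 1 := by
  simp [Complex.norm_exp]

lemma prod_exp (α t : ℝ) :
    Complex.exp ((t:ℂ) * I) * Complex.exp ((α:ℂ) * t * I) *
      Complex.exp (-((1:ℝ) + α) * (t:ℂ) * I) = 1 := by
  rw [← Complex.exp_add, ← Complex.exp_add, ← Complex.exp_zero]
  congr 1
  push_cast
  ring

lemma mem_SU (α t : ℝ) :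
    NormedSpace.exp (t • Xmat α) ∈ Matrix.specialUnitaryGroup (Fin 3) ℂ := by
  rw [exp_eq, Matrix.mem_specialUnitaryGroup_iff]
  constructor
  · rw [Matrix.mem_unitaryGroup_iff, Matrix.star_eq_conjTranspose,
      Matrix.diagonal_conjTranspose, Matrix.diagonal_mul_diagonal, ← Matrix.diagonal_one]
    apply congrArg Matrix.diagonal
    funext i
    fin_cases i <;> simp [Complex.mul_conj, Complex.normSq_eq_norm_sq, Complex.norm_exp]
  · rw [Matrix.det_diagonal, Fin.prod_univ_three]
    simpa using prod_exp α t

lemma S_subset_T (α : ℝ) : S α ⊆ T := by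
  rintro M ⟨t, rfl⟩
  rw [exp_eq]
  refine ⟨_, _, _, rfl, ?_, ?_, ?_, prod_exp α t⟩
  · exact abs_exp_real_mul_I t
  · simp [Complex.norm_exp]
  · simp [Complex.norm_exp]

lemma T_isClosed : IsClosed T := by
  have hT : T = (fun z : ℂ × ℂ × ℂ => Matrix.diagonal ![z.1, z.2.1, z.2.2]) ''
      {z : ℂ × ℂ × ℂ | ‖z.1‖ = 1 ∧ ‖z.2.1‖ = 1 ∧
        ‖z.2.2‖ = 1 ∧ z.1 * z.2.1 * z.2.2 = 1} := by
    ext M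
    constructor
    · rintro ⟨z₁, z₂, z₃, rfl, h1, h2, h3, h4⟩
      exact ⟨(z₁, z₂, z₃), ⟨h1, h2, h3, h4⟩, rfl⟩
    · rintro ⟨⟨z₁, z₂, z₃⟩, ⟨h1, h2, h3, h4⟩, rfl⟩
      exact ⟨z₁, z₂, z₃, rfl, h1, h2, h3, h4⟩
  rw [hT]
  refine (IsCompact.image ?_ ?_).isClosed
  · apply Metric.isCompact_of_isClosed_isBounded
    · simp only [Set.setOf_and]
      refine ((isClosed_eq (continuous_norm.comp continuous_fst) continuous_const).inter
        ((isClosed_eq (continuous_norm.comp (continuous_fst.comp continuous_snd))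
          continuous_const).inter
        ((isClosed_eq (continuous_norm.comp (continuous_snd.comp continuous_snd))
          continuous_const).inter
        (isClosed_eq (by fun_prop) continuous_const))))
    · apply Bornology.IsBounded.subset
        (Metric.isBounded_closedBall (x := (0 : ℂ × ℂ × ℂ)) (r := 1))
      rintro ⟨z₁, z₂, z₃⟩ ⟨h1, h2, h3, _⟩
      simp only [Metric.mem_closedBall, dist_zero_right, Prod.norm_def]
      simp only [h1, h2, h3, le_refl, max_le_iff]
      norm_num
  · exact Continuous.matrix_diagonal (by
      apply continuous_pi
      intro i
      fin_cases i <;> simp <;> fun_prop)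

lemma exp_shift (x y : ℝ) (n : ℤ) (h : x = y + 2 * Real.pi * n) :
    Complex.exp ((x:ℂ) * I) = Complex.exp ((y:ℂ) * I) := by
  subst h
  push_cast
  rw [add_mul, Complex.exp_add,
    show ((2:ℂ) * Real.pi * n * I) = n * (2 * Real.pi * I) by ring,
    Complex.exp_int_mul_two_pi_mul_I, mul_one]

lemma dense_sub (α : ℝ) (hα : Irrational α) :
    Dense {x : ℝ | ∃ m n : ℤ, x = m + n * α} := by
  let G : AddSubgroup ℝ :=
    { carrier := {x | ∃ m n : ℤ, x = m + n * α}
      zero_mem' := ⟨0, 0, by simp⟩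
      add_mem' := by
        rintro a b ⟨m, n, rfl⟩ ⟨m', n', rfl⟩
        exact ⟨m + m', n + n', by push_cast; ring⟩
      neg_mem' := by
        rintro a ⟨m, n, rfl⟩
        exact ⟨-m, -n, by push_cast; ring⟩ }
  rcases G.dense_or_cyclic with h | ⟨a, ha⟩
  · exact h
  · exfalso
    have h1 : (1 : ℝ) ∈ G := ⟨1, 0, by simp⟩
    have h2 : α ∈ G := ⟨0, 1, by simp⟩
    rw [ha, AddSubgroup.mem_closure_singleton] at h1 h2
    obtain ⟨p, hp⟩ := h1
    obtain ⟨q, hq⟩ := h2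
    rw [zsmul_eq_mul] at hp hq
    have hp0 : (p : ℝ) ≠ 0 := by
      rintro h
      rw [h, zero_mul] at hp
      exact one_ne_zero hp.symm
    have key : α * p = q := by linear_combination (q : ℝ) * hp - (p : ℝ) * hq
    have hpz : p ≠ 0 := by exact_mod_cast hp0
    have hp0' : (p : ℚ) ≠ 0 := Int.cast_ne_zero.2 hpz
    exact hα ⟨(q : ℚ) / (p : ℚ), by push_cast; field_simp; linarith [key]⟩

set_option maxHeartbeats 1000000 in
lemma T_subset_closure (α : ℝ) (hα : Irrational α) : T ⊆ closure (S α) := by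
  rintro M ⟨z₁, z₂, z₃, rfl, h1, h2, h3, h4⟩
  have hz₁ : Complex.exp ((z₁.arg : ℂ) * I) = z₁ := by
    conv_rhs => rw [← Complex.norm_mul_exp_arg_mul_I z₁]
    rw [h1]; simp
  have hz₂ : Complex.exp ((z₂.arg : ℂ) * I) = z₂ := by
    conv_rhs => rw [← Complex.norm_mul_exp_arg_mul_I z₂]
    rw [h2]; simp
  set θ₁ := z₁.arg with hθ₁
  set θ₂ := z₂.arg with hθ₂
  set c : ℝ := (θ₂ - α * θ₁) / (2 * Real.pi) with hc
  obtain ⟨g, hgD, hgc⟩ := mem_closure_iff_seq_limit.1 (dense_sub α hα c)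
  choose m n hmn using hgD
  set t : ℕ → ℝ := fun k => θ₁ + 2 * Real.pi * n k with htdef
  have hc2 : 2 * Real.pi * c = θ₂ - α * θ₁ := by
    rw [hc]; field_simp
  have he : Tendsto (fun k => Complex.exp (((2 * Real.pi * (g k - c) : ℝ) : ℂ) * I))
      atTop (nhds 1) := by
    have hcont : Continuous fun x : ℝ => Complex.exp ((x : ℂ) * I) := by
      apply Complex.continuous_exp.comp
      fun_prop
    have hd : Tendsto (fun k => 2 * Real.pi * (g k - c)) atTop (nhds 0) := by
      have h' : Tendsto (fun k => g k - c) atTop (nhds 0) := by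
        simpa using hgc.sub (tendsto_const_nhds (x := c))
      simpa using h'.const_mul (2 * Real.pi)
    have key := (hcont.tendsto 0).comp hd
    have h0 : Complex.exp (((0:ℝ):ℂ) * I) = 1 := by simp
    rw [← h0]
    exact key
  have h10 : ∀ k, Complex.exp ((t k : ℂ) * I) = z₁ := fun k => by
    rw [← hz₁]; exact exp_shift _ _ (n k) rfl
  have h20 : ∀ k, Complex.exp ((α : ℂ) * (t k) * I)
      = z₂ * Complex.exp (((2 * Real.pi * (g k - c) : ℝ) : ℂ) * I) := by
    intro k
    rw [← hz₂, ← Complex.exp_add,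
      show ((α : ℂ) * (t k) * I) = ((α * t k : ℝ) : ℂ) * I by push_cast; ring,
      show (θ₂:ℂ) * I + ((2 * Real.pi * (g k - c) : ℝ):ℂ) * I
        = ((θ₂ + 2 * Real.pi * (g k - c) : ℝ):ℂ) * I by push_cast; ring]
    refine exp_shift _ _ (-(m k)) ?_
    have hg := hmn k
    push_cast
    linear_combination hc2 - 2 * Real.pi * hg
  have h30 : ∀ k, Complex.exp (-((1:ℝ) + α) * (t k : ℂ) * I)
      = (Complex.exp ((t k : ℂ) * I) * Complex.exp ((α : ℂ) * (t k) * I))⁻¹ := by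
    intro k
    rw [← Complex.exp_add, ← Complex.exp_neg]
    congr 1
    push_cast
    ring
  have hz₁0 : z₁ ≠ 0 := by intro h; rw [h] at h1; simp at h1
  have hz₂0 : z₂ ≠ 0 := by intro h; rw [h] at h2; simp at h2
  have hz₃ : z₃ = (z₁ * z₂)⁻¹ := eq_inv_of_mul_eq_one_left (by linear_combination h4)
  have l1 : Tendsto (fun k => Complex.exp ((t k : ℂ) * I)) atTop (nhds z₁) := by
    simp only [h10]; exact tendsto_const_nhds
  have l2 : Tendsto (fun k => Complex.exp ((α : ℂ) * (t k) * I)) atTop (nhds z₂) := by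
    simp only [h20]
    simpa using tendsto_const_nhds.mul he
  have l3 : Tendsto (fun k => Complex.exp (-((1:ℝ) + α) * (t k : ℂ) * I)) atTop
      (nhds z₃) := by
    simp only [h30]
    rw [hz₃]
    exact (l1.mul l2).inv₀ (mul_ne_zero hz₁0 hz₂0)
  have hvec : Tendsto (fun k => (![Complex.exp ((t k : ℂ) * I),
      Complex.exp ((α : ℂ) * (t k) * I),
      Complex.exp (-((1:ℝ) + α) * (t k : ℂ) * I)] : Fin 3 → ℂ)) atTop
      (nhds ![z₁, z₂, z₃]) := by
    rw [tendsto_pi_nhds]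
    intro i
    fin_cases i
    · simpa using l1
    · simpa using l2
    · simpa using l3
  have hdiag : Tendsto (fun k => NormedSpace.exp (t k • Xmat α)) atTop
      (nhds (Matrix.diagonal ![z₁, z₂, z₃])) := by
    have hdcont : Continuous fun v : Fin 3 → ℂ => Matrix.diagonal v :=
      Continuous.matrix_diagonal continuous_id
    simp only [exp_eq]
    exact (hdcont.tendsto _).comp hvec
  exact mem_closure_of_tendsto hdiag (Eventually.of_forall fun k => ⟨t k, rfl⟩)

lemma real_of_mul_I {x y : ℝ} (h : (x:ℂ) * I = (y:ℂ) * I) : x = y := by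
  have := mul_right_cancel₀ Complex.I_ne_zero h
  exact_mod_cast this

lemma S_ne_T (α : ℝ) (hα : Irrational α) : S α ≠ T := by
  intro hST
  have hMT : (Matrix.diagonal ![1, -1, -1] : Matrix (Fin 3) (Fin 3) ℂ) ∈ T :=
    ⟨1, -1, -1, rfl, by simp, by simp, by simp, by norm_num⟩
  rw [← hST] at hMT
  obtain ⟨t, ht⟩ := hMT
  rw [exp_eq] at ht
  have h00 := congrFun (congrFun ht 0) 0
  have h11 := congrFun (congrFun ht 1) 1
  simp [Matrix.diagonal_apply_eq] at h00 h11
  obtain ⟨nn, hnn⟩ := Complex.exp_eq_one_iff.mp h00.symm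
  rw [show ((nn:ℂ) * (2 * ↑Real.pi * I)) = ((2 * Real.pi * nn : ℝ) : ℂ) * I by push_cast; ring]
    at hnn
  have ht' : t = 2 * Real.pi * nn := real_of_mul_I hnn
  by_cases hn : nn = 0
  · rw [ht', hn] at h11
    simp at h11
    exact absurd h11 (by norm_num)
  · have hsq : Complex.exp (((2 * (α * t) : ℝ) : ℂ) * I) = 1 := by
      have hs : (Complex.exp ((α:ℂ) * t * I)) ^ 2 = 1 := by rw [← h11]; norm_num
      rw [show (((2 * (α * t) : ℝ)) : ℂ) * I = (α:ℂ) * t * I + (α:ℂ) * t * I by push_cast; ring,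
        Complex.exp_add, ← sq]
      exact hs
    obtain ⟨k, hk⟩ := Complex.exp_eq_one_iff.mp hsq
    rw [show ((k:ℂ) * (2 * ↑Real.pi * I)) = ((2 * Real.pi * k : ℝ) : ℂ) * I by push_cast; ring]
      at hk
    have hreal : 2 * (α * t) = 2 * Real.pi * k := real_of_mul_I hk
    rw [ht'] at hreal
    have key : α * (2 * nn) = k := by
      have h2p : (2 * Real.pi) ≠ 0 := by positivity
      apply mul_left_cancel₀ h2p
      linear_combination hreal
    have hn2 : ((2 * nn : ℤ) : ℝ) ≠ 0 := by
      exact_mod_cast mul_ne_zero two_ne_zero hn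
    refine hα ⟨(k : ℚ) / ((2 * nn : ℤ) : ℚ), ?_⟩
    push_cast
    rw [div_eq_iff (by simpa using hn)]
    push_cast at key
    linarith [key]

end Stmt13

open Stmt13 in
/-- For `α` irrational and `X = diag(i, αi, −(1+α)i)`: (i) `exp(tX) ∈ SU(3)` for all
`t ∈ ℝ`; (ii) the closure of the one-parameter subgroup `S = {exp(tX)}` is the maximal
torus `T` of diagonal special unitary matrices; and (iii) `S ≠ T`, so `S` is not a closed
subgroup of `SU(3)`. -/
theorem stmt13 (α : ℝ) (hα : Irrational α) :
    (∀ t : ℝ, NormedSpace.exp (t • Xmat α) ∈ Matrix.specialUnitaryGroup (Fin 3) ℂ) ∧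
    closure (S α) = T ∧
    S α ≠ T := by
  exact ⟨fun t => mem_SU α t,
    subset_antisymm (closure_minimal (S_subset_T α) T_isClosed) (T_subset_closure α hα),
    S_ne_T α hα⟩
end
end

section
/- Let α, β, γ ∈ ℝ. On the vector space a = so(3) ⊕ ℝ³ ⊕ ℝ, with elements written A + P_v + cH, define the skew-symmetric bilinear bracket by [A,A'] = AA' − A'A, [A,P_v] = P_{Av}, [A,H] = 0, [H,P_v] = αP_v, and [P_u,P_v] = β(uvᵀ − vuᵀ) + γP_{u×v}, where u×v is the vector cross product on ℝ³. Then this bracket satisfies the Jacobi identity if and only if αβ = 0 and αγ = 0. -/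
open Matrix

noncomputable section

namespace Stmt15

/-- `so(3)`: the real skew-symmetric `3 × 3` matrices. -/
def so3 : Submodule ℝ (Matrix (Fin 3) (Fin 3) ℝ) where
  carrier := {M | Mᵀ = -M}
  add_mem' := fun {a b} ha hb => by
    simp only [Set.mem_setOf_eq] at ha hb ⊢
    rw [Matrix.transpose_add, ha, hb, neg_add]
  zero_mem' := by simp only [Set.mem_setOf_eq, Matrix.transpose_zero, neg_zero]
  smul_mem' := fun c a ha => by
    simp only [Set.mem_setOf_eq] at ha ⊢
    rw [Matrix.transpose_smul, ha, smul_neg]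

theorem mem_so3 {M : Matrix (Fin 3) (Fin 3) ℝ} : M ∈ so3 ↔ Mᵀ = -M := Iff.rfl

/-- The commutator `AA' − A'A` of two skew-symmetric matrices, as an element of `so(3)`. -/
def soComm (A B : so3) : so3 :=
  ⟨A.val * B.val - B.val * A.val, by
    have hA : (A.val)ᵀ = -A.val := A.2
    have hB : (B.val)ᵀ = -B.val := B.2
    rw [mem_so3, Matrix.transpose_sub, Matrix.transpose_mul, Matrix.transpose_mul, hA, hB,
      neg_mul_neg, neg_mul_neg, neg_sub]⟩

/-- `uvᵀ − vuᵀ` as an element of `so(3)`. -/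
def outer (u v : Fin 3 → ℝ) : so3 :=
  ⟨vecMulVec u v - vecMulVec v u, by
    rw [mem_so3]
    ext i j
    simp only [Matrix.transpose_apply, Matrix.sub_apply, Matrix.neg_apply, Matrix.vecMulVec_apply]
    ring⟩

/-- The underlying vector space `a = so(3) ⊕ ℝ³ ⊕ ℝ`, an element `(A, v, c)` standing
for `A + P_v + cH`. -/
abbrev AV3 := so3 × (Fin 3 → ℝ) × ℝ

/-- The skew-symmetric bilinear bracket on `a` determined by `[A,A'] = AA' − A'A`,
`[A,P_v] = P_{Av}`, `[A,H] = 0`, `[H,P_v] = αP_v` and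
`[P_u,P_v] = β(uvᵀ − vuᵀ) + γP_{u×v}`. -/
def ariBr3 (α β γ : ℝ) (X Y : AV3) : AV3 :=
  (soComm X.1 Y.1 + β • outer X.2.1 Y.2.1,
   X.1.val.mulVec Y.2.1 - Y.1.val.mulVec X.2.1 + (α * X.2.2) • Y.2.1 - (α * Y.2.2) • X.2.1
     + γ • crossProduct X.2.1 Y.2.1,
   0)


theorem so3_rep {M : Matrix (Fin 3) (Fin 3) ℝ} (hM : M ∈ so3) :
    M = !![0, M 0 1, M 0 2; -(M 0 1), 0, M 1 2; -(M 0 2), -(M 1 2), 0] := by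
  have e : ∀ i j, M j i = - M i j := fun i j => by
    have := congrFun (congrFun hM i) j; simpa using this
  ext i j
  fin_cases i <;> fin_cases j <;>
    simp [Matrix.cons_val_zero, Matrix.cons_val_one] <;>
    linarith [e 0 0, e 1 1, e 2 2, e 0 1, e 0 2, e 1 2]

theorem so3_ext {S : so3} (h1 : S.val 0 1 = 0) (h2 : S.val 0 2 = 0) (h3 : S.val 1 2 = 0) :
    S = 0 := by
  have e : ∀ i j, S.val j i = - S.val i j := fun i j => by
    have := congrFun (congrFun S.2 i) j; simpa using this
  refine Subtype.ext ?_
  ext i j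
  fin_cases i <;> fin_cases j <;>
    simp [Matrix.zero_apply] <;>
    linarith [e 0 0, e 1 1, e 2 2, e 0 1, e 0 2, e 1 2]

set_option maxHeartbeats 8000000 in
theorem jac (α β γ : ℝ) (hc : α = 0 ∨ (β = 0 ∧ γ = 0)) (X Y Z : AV3) :
    ariBr3 α β γ (ariBr3 α β γ X Y) Z + ariBr3 α β γ (ariBr3 α β γ Y Z) X
      + ariBr3 α β γ (ariBr3 α β γ Z X) Y = 0 := by
  obtain ⟨⟨A, hA⟩, u, a⟩ := X
  obtain ⟨⟨B, hB⟩, v, b⟩ := Y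
  obtain ⟨⟨C, hC⟩, w, c⟩ := Z
  obtain ⟨x1, x2, x3, rfl⟩ : ∃ p q r, A = !![0,p,q; -p,0,r; -q,-r,0] :=
    ⟨_, _, _, so3_rep hA⟩
  obtain ⟨y1, y2, y3, rfl⟩ : ∃ p q r, B = !![0,p,q; -p,0,r; -q,-r,0] :=
    ⟨_, _, _, so3_rep hB⟩
  obtain ⟨z1, z2, z3, rfl⟩ : ∃ p q r, C = !![0,p,q; -p,0,r; -q,-r,0] :=
    ⟨_, _, _, so3_rep hC⟩
  refine Prod.ext (so3_ext ?_ ?_ ?_) (Prod.ext (funext fun i => ?_) (by simp [ariBr3])) <;>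
    [skip; skip; skip; fin_cases i] <;>
    obtain h | ⟨h1, h2⟩ := hc <;> subst_vars <;>
    (simp [ariBr3, soComm, outer, Matrix.mul_apply, Fin.sum_univ_three,
        Matrix.vecMulVec_apply, Matrix.mulVec, Matrix.vecMul, dotProduct, cross_apply,
        Matrix.vecHead, Matrix.vecTail, Function.comp, Matrix.add_apply, Matrix.smul_apply,
        Pi.add_apply, Pi.smul_apply, smul_eq_mul, Matrix.sub_apply, -cons_vecMulVec, -vecMulVec_cons];
     ring)

end Stmt15

open Stmt15 in
/-- The bracket on `so(3) ⊕ ℝ³ ⊕ ℝ` given by `[A,A'] = AA' − A'A`, `[A,P_v] = P_{Av}`,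
`[A,H] = 0`, `[H,P_v] = αP_v`, `[P_u,P_v] = β(uvᵀ − vuᵀ) + γP_{u×v}` satisfies the
Jacobi identity if and only if `αβ = 0` and `αγ = 0`. -/
theorem stmt15 (α β γ : ℝ) :
    (∀ X Y Z : AV3,
        ariBr3 α β γ (ariBr3 α β γ X Y) Z + ariBr3 α β γ (ariBr3 α β γ Y Z) X
          + ariBr3 α β γ (ariBr3 α β γ Z X) Y = 0) ↔ (α * β = 0 ∧ α * γ = 0) := by
  constructor
  · intro h
    have hs := h (0, 0, 1) (0, ![1,0,0], 0) (0, ![0,1,0], 0)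
    have h1 := congrFun (congrFun (congrArg (fun t : AV3 => (t.1 : Matrix (Fin 3) (Fin 3) ℝ)) hs) 0) 1
    have h2 := congrFun (congrArg (fun t : AV3 => t.2.1) hs) 2
    simp [ariBr3, soComm, outer, Matrix.mul_apply, Fin.sum_univ_three,
      Matrix.vecMulVec_apply, Matrix.mulVec, dotProduct, cross_apply,
      Matrix.vecHead, Matrix.vecTail, Function.comp] at h1 h2
    refine ⟨?_, by linear_combination h2⟩
    rcases h1 with h | h
    · rw [h, mul_zero]
    · rw [h, zero_mul]
  · rintro ⟨h1, h2⟩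
    have hc : α = 0 ∨ (β = 0 ∧ γ = 0) := by
      rcases eq_or_ne α 0 with h | h
      · exact Or.inl h
      · exact Or.inr ⟨(mul_eq_zero.mp h1).resolve_left h, (mul_eq_zero.mp h2).resolve_left h⟩
    exact fun X Y Z => jac α β γ hc X Y Z
end
end

section
/- Let D ≥ 3 and let c be the Carroll algebra: the real Lie algebra with basis {J_{ab} = −J_{ba}, B_a, P_a, H} and nonzero brackets [J_{ab},J_{cd}] = δ_{bc}J_{ad} − δ_{ac}J_{bd} − δ_{bd}J_{ac} + δ_{ad}J_{bc}, [J_{ab},B_c] = δ_{bc}B_a − δ_{ac}B_b, [J_{ab},P_c] = δ_{bc}P_a − δ_{ac}P_b, [B_a,P_b] = δ_{ab}H. For (α,β) ∈ ℝ² with (α,β) ≠ (0,0), let h_{α,β} := span{J_{ab} (1 ≤ a < b ≤ D)} ⊕ span{αB_a + βP_a (1 ≤ a ≤ D)}. Then (i) every h_{α,β} is a Lie subalgebra of c, and (ii) for every such (α,β) there exists a Lie algebra automorphism φ of c with φ(h_{α,β}) = h_{1,0} = span{J_{ab}, B_a}. Consequently, up to automorphism the Carroll algebra admits a unique admissible subalgebra,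 and hence a unique associated homogeneous spacetime (the carrollian spacetime). -/
namespace Stmt18

/-- Kronecker delta. -/
def kron {n : ℕ} (a b : Fin n) : ℝ := if a = b then 1 else 0

/-- The family `{J_{ab} (a < b), B_a, P_a, H}`, indexing a basis of a kinematical Lie
algebra. -/
def kinFam {L : Type*} {D : ℕ} (J : Fin D → Fin D → L) (B P : Fin D → L) (H : L) :
    ({p : Fin D × Fin D // p.1 < p.2} ⊕ (Fin D ⊕ (Fin D ⊕ Unit))) → L :=
  Sum.elim (fun p => J p.1.1 p.1.2) (Sum.elim B (Sum.elim P fun _ => H))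

/-- The admissible subspace `h_{α,β} = span{J_{ab}} ⊕ span{αB_a + βP_a}`. -/
def adm {L : Type*} [AddCommGroup L] [Module ℝ L] {D : ℕ}
    (J : Fin D → Fin D → L) (B P : Fin D → L) (α β : ℝ) : Submodule ℝ L :=
  Submodule.span ℝ ((Set.range fun p : Fin D × Fin D => J p.1 p.2) ∪
    Set.range fun a => α • B a + β • P a)

lemma kron_symm {n : ℕ} (a b : Fin n) : kron a b = kron b a := by
  simp [kron, eq_comm]

variable {L : Type*} [LieRing L] [LieAlgebra ℝ L]

lemma aux_bracket_span {s : Set L}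
    (h : ∀ x ∈ s, ∀ y ∈ s, ⁅x, y⁆ ∈ Submodule.span ℝ s) :
    ∀ X ∈ Submodule.span ℝ s, ∀ Y ∈ Submodule.span ℝ s, ⁅X, Y⁆ ∈ Submodule.span ℝ s := by
  intro X hX Y hY
  induction hX, hY using Submodule.span_induction₂ with
  | mem_mem x y hx hy => exact h x hx y hy
  | zero_left y hy => simp
  | zero_right x hx => simp
  | add_left x y z _ _ _ h1 h2 => rw [add_lie]; exact add_mem h1 h2
  | add_right x y z _ _ _ h1 h2 => rw [lie_add]; exact add_mem h1 h2
  | smul_left r x y _ _ h1 => rw [smul_lie]; exact Submodule.smul_mem _ _ h1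
  | smul_right r x y _ _ h1 => rw [lie_smul]; exact Submodule.smul_mem _ _ h1

lemma aux_hom (f : L →ₗ[ℝ] L) {s : Set L} (hs : Submodule.span ℝ s = ⊤)
    (h : ∀ x ∈ s, ∀ y ∈ s, ⁅f x, f y⁆ = f ⁅x, y⁆) :
    ∀ x y : L, ⁅f x, f y⁆ = f ⁅x, y⁆ := by
  intro x y
  have hx : x ∈ Submodule.span ℝ s := hs ▸ Submodule.mem_top
  have hy : y ∈ Submodule.span ℝ s := hs ▸ Submodule.mem_top
  induction hx, hy using Submodule.span_induction₂ with
  | mem_mem x y hx hy => exact h x hx y hy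
  | zero_left y hy => simp
  | zero_right x hx => simp
  | add_left x y z _ _ _ h1 h2 => rw [add_lie, map_add, map_add, add_lie, h1, h2]
  | add_right x y z _ _ _ h1 h2 => rw [lie_add, map_add, map_add, lie_add, h1, h2]
  | smul_left r x y _ _ h1 => rw [map_smul, smul_lie, smul_lie, h1, map_smul]
  | smul_right r x y _ _ h1 => rw [map_smul, lie_smul, lie_smul, h1, map_smul]

end Stmt18

open Stmt18 in
/-- Let `c` be the Carroll algebra (`D ≥ 3`), with basis `{J_{ab}, B_a, P_a, H}` and nonzero
brackets `[J,J]`, `[J,B]`, `[J,P]` as usual and `[B_a,P_b] = δ_{ab}H`.  Then (i) every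
`h_{α,β} = span{J_{ab}} ⊕ span{αB_a + βP_a}` (with `(α,β) ≠ (0,0)`) is a Lie subalgebra of
`c`, and (ii) for every such `(α,β)` there is a Lie algebra automorphism `φ` of `c` with
`φ(h_{α,β}) = h_{1,0} = span{J_{ab}, B_a}`.  Consequently, up to automorphism the Carroll
algebra admits a unique admissible subalgebra, hence a unique associated homogeneous
spacetime (the carrollian spacetime). -/
theorem stmt18 {D : ℕ} (hD : 3 ≤ D) {L : Type*} [LieRing L] [LieAlgebra ℝ L]
    (J : Fin D → Fin D → L) (B P : Fin D → L) (H : L)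
    (hJskew : ∀ a b, J a b = -J b a)
    (hindep : LinearIndependent ℝ (kinFam J B P H))
    (hspan : Submodule.span ℝ (Set.range (kinFam J B P H)) = ⊤)
    (hJJ : ∀ a b c d, ⁅J a b, J c d⁆ =
        kron b c • J a d - kron a c • J b d - kron b d • J a c + kron a d • J b c)
    (hJB : ∀ a b c, ⁅J a b, B c⁆ = kron b c • B a - kron a c • B b)
    (hJP : ∀ a b c, ⁅J a b, P c⁆ = kron b c • P a - kron a c • P b)
    (hJH : ∀ a b, ⁅J a b, H⁆ = 0)
    (hHB : ∀ a, ⁅H, B a⁆ = 0)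
    (hHP : ∀ a, ⁅H, P a⁆ = 0)
    (hBB : ∀ a b, ⁅B a, B b⁆ = 0)
    (hPP : ∀ a b, ⁅P a, P b⁆ = 0)
    (hBP : ∀ a b, ⁅B a, P b⁆ = kron a b • H) :
    ∀ α β : ℝ, ¬(α = 0 ∧ β = 0) →
      (∀ X ∈ adm J B P α β, ∀ Y ∈ adm J B P α β, ⁅X, Y⁆ ∈ adm J B P α β) ∧
      ∃ φ : L ≃ₗ⁅ℝ⁆ L,
        Submodule.map φ.toLinearEquiv.toLinearMap (adm J B P α β) = adm J B P 1 0 := by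
  intro α β hne
  have hk0 : α ^ 2 + β ^ 2 ≠ 0 := by
    intro h
    exact hne ⟨by nlinarith [sq_nonneg α, sq_nonneg β], by nlinarith [sq_nonneg α, sq_nonneg β]⟩
  -- derived brackets
  have hPB : ∀ a b, ⁅P a, B b⁆ = -(kron a b • H) := by
    intro a b; rw [← lie_skew, hBP, kron_symm]
  have hBJ : ∀ a b c, ⁅B c, J a b⁆ = -(kron b c • B a - kron a c • B b) := by
    intro a b c; rw [← lie_skew, hJB]
  have hPJ : ∀ a b c, ⁅P c, J a b⁆ = -(kron b c • P a - kron a c • P b) := by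
    intro a b c; rw [← lie_skew, hJP]
  have hHJ : ∀ a b, ⁅H, J a b⁆ = 0 := by
    intro a b; rw [← lie_skew, hJH, neg_zero]
  have hBH : ∀ a, ⁅B a, H⁆ = 0 := by intro a; rw [← lie_skew, hHB, neg_zero]
  have hPH : ∀ a, ⁅P a, H⁆ = 0 := by intro a; rw [← lie_skew, hHP, neg_zero]
  have hHH : ⁅H, H⁆ = 0 := lie_self H
  have hJ0 : ∀ a, J a a = 0 := by
    intro a
    have h2 : (2 : ℝ) • J a a = 0 := by
      rw [two_smul]; nth_rewrite 1 [hJskew a a]; simp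
    simpa using (smul_eq_zero.mp h2).resolve_left (by norm_num)
  -- Part (i): closure under bracket
  have memJ : ∀ a b : Fin D, J a b ∈ adm J B P α β := fun a b =>
    Submodule.subset_span (Or.inl ⟨(a, b), rfl⟩)
  have memW : ∀ a : Fin D, α • B a + β • P a ∈ adm J B P α β := fun a =>
    Submodule.subset_span (Or.inr ⟨a, rfl⟩)
  constructor
  · apply aux_bracket_span
    rintro x (⟨p, rfl⟩ | ⟨a, rfl⟩) y (⟨q, rfl⟩ | ⟨b, rfl⟩)
    · rw [hJJ]
      exact add_mem (sub_mem (sub_mem (Submodule.smul_mem _ _ (memJ _ _))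
        (Submodule.smul_mem _ _ (memJ _ _))) (Submodule.smul_mem _ _ (memJ _ _)))
        (Submodule.smul_mem _ _ (memJ _ _))
    · have : ⁅J p.1 p.2, α • B b + β • P b⁆ =
          kron p.2 b • (α • B p.1 + β • P p.1) - kron p.1 b • (α • B p.2 + β • P p.2) := by
        simp only [lie_add, lie_smul, hJB, hJP]
        module
      rw [this]
      exact sub_mem (Submodule.smul_mem _ _ (memW _)) (Submodule.smul_mem _ _ (memW _))
    · have : ⁅α • B a + β • P a, J q.1 q.2⁆ =
          -(kron q.2 a • (α • B q.1 + β • P q.1) - kron q.1 a • (α • B q.2 + β • P q.2)) := by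
        simp only [add_lie, smul_lie, hBJ, hPJ]
        module
      rw [this]
      exact neg_mem (sub_mem (Submodule.smul_mem _ _ (memW _)) (Submodule.smul_mem _ _ (memW _)))
    · have : ⁅α • B a + β • P a, α • B b + β • P b⁆ = 0 := by
        simp only [add_lie, lie_add, smul_lie, lie_smul, hBB, hPP, hBP, hPB]
        module
      rw [this]; exact zero_mem _
  -- Part (ii): the automorphism
  · set bas : Module.Basis _ ℝ L := Module.Basis.mk hindep (by rw [hspan]) with hbasdef
    have hbas : ∀ i, bas i = kinFam J B P H i := fun i => by rw [hbasdef, Module.Basis.coe_mk]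
    set B' : Fin D → L := fun a => α • B a - β • P a with hB'
    set P' : Fin D → L := fun a => β • B a + α • P a with hP'
    set H' : L := (α ^ 2 + β ^ 2) • H with hH'
    set f : L →ₗ[ℝ] L := bas.constr ℝ (kinFam J B' P' H') with hfdef
    have hf : ∀ i, f (kinFam J B P H i) = kinFam J B' P' H' i := by
      intro i; rw [← hbas, hfdef, Module.Basis.constr_basis]
    have fJlt : ∀ (a b : Fin D), a < b → f (J a b) = J a b := fun a b h =>
      hf (Sum.inl ⟨(a, b), h⟩)
    have fB : ∀ a, f (B a) = α • B a - β • P a := fun a => hf (Sum.inr (Sum.inl a))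
    have fP : ∀ a, f (P a) = β • B a + α • P a := fun a => hf (Sum.inr (Sum.inr (Sum.inl a)))
    have fH : f H = (α ^ 2 + β ^ 2) • H := hf (Sum.inr (Sum.inr (Sum.inr ())))
    have fJ : ∀ a b, f (J a b) = J a b := by
      intro a b
      rcases lt_trichotomy a b with h | h | h
      · exact fJlt a b h
      · subst h; rw [hJ0, map_zero]
      · rw [hJskew, map_neg, fJlt b a h, ← hJskew]
    -- inverse linear map
    set k : ℝ := α ^ 2 + β ^ 2 with hkk
    set B'' : Fin D → L := fun a => k⁻¹ • (α • B a + β • P a) with hB''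
    set P'' : Fin D → L := fun a => k⁻¹ • ((-β) • B a + α • P a) with hP''
    set H'' : L := k⁻¹ • H with hH''
    set g : L →ₗ[ℝ] L := bas.constr ℝ (kinFam J B'' P'' H'') with hgdef
    have hg : ∀ i, g (kinFam J B P H i) = kinFam J B'' P'' H'' i := by
      intro i; rw [← hbas, hgdef, Module.Basis.constr_basis]
    have gB : ∀ a, g (B a) = k⁻¹ • (α • B a + β • P a) := fun a => hg (Sum.inr (Sum.inl a))
    have gP : ∀ a, g (P a) = k⁻¹ • ((-β) • B a + α • P a) :=
      fun a => hg (Sum.inr (Sum.inr (Sum.inl a)))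
    have gH : g H = k⁻¹ • H := hg (Sum.inr (Sum.inr (Sum.inr ())))
    have gJlt : ∀ (a b : Fin D), a < b → g (J a b) = J a b := fun a b h =>
      hg (Sum.inl ⟨(a, b), h⟩)
    have gJ : ∀ a b, g (J a b) = J a b := by
      intro a b
      rcases lt_trichotomy a b with h | h | h
      · exact gJlt a b h
      · subst h; rw [hJ0, map_zero]
      · rw [hJskew, map_neg, gJlt b a h, ← hJskew]
    have hfg : f.comp g = LinearMap.id := by
      apply bas.ext
      intro i
      rw [hbas]
      rcases i with p | a | a | u <;>
        simp only [kinFam, Sum.elim_inl, Sum.elim_inr, LinearMap.comp_apply,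
          LinearMap.id_apply, map_add, map_sub, map_neg, map_smul, gJ, gB, gP, gH,
          fJ, fB, fP, fH]
      · match_scalars <;> field_simp <;> ring
      · match_scalars <;> field_simp <;> ring
      · match_scalars <;> field_simp
    have hgf : g.comp f = LinearMap.id := by
      apply bas.ext
      intro i
      rw [hbas]
      rcases i with p | a | a | u <;>
        simp only [kinFam, Sum.elim_inl, Sum.elim_inr, LinearMap.comp_apply,
          LinearMap.id_apply, map_add, map_sub, map_neg, map_smul, fJ, fB, fP, fH,
          gJ, gB, gP, gH]
      · match_scalars <;> field_simp <;> ring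
      · match_scalars <;> field_simp <;> ring
      · match_scalars <;> field_simp
    -- f is a Lie algebra morphism
    have hlie : ∀ x y : L, ⁅f x, f y⁆ = f ⁅x, y⁆ := by
      apply aux_hom f hspan
      rintro x ⟨i, rfl⟩ y ⟨j, rfl⟩
      rcases i with p | a | a | u <;> rcases j with q | b | b | v <;>
        simp only [kinFam, Sum.elim_inl, Sum.elim_inr, fJ, fB, fP, fH, hJJ, hJB, hJP, hJH,
          hBJ, hPJ, hHJ, hBB, hPP, hBP, hPB, hBH, hPH, hHB, hHP, hHH, lie_add, add_lie,
          lie_sub, sub_lie, lie_smul, smul_lie, lie_neg, neg_lie, map_add, map_sub, map_neg,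
          map_smul, map_zero, smul_zero, zero_smul, neg_zero, add_zero, zero_add, sub_zero,
          zero_sub, smul_neg] <;>
      first
        | rfl
        | module
    set elin : L ≃ₗ[ℝ] L := LinearEquiv.ofLinear f g hfg hgf with helin
    refine ⟨{ elin with map_lie' := fun {x y} => (hlie x y).symm }, ?_⟩
    have hmap : Submodule.map f (adm J B P α β) = adm J B P 1 0 := by
      rw [adm, adm, Submodule.map_span]
      apply le_antisymm
      · rw [Submodule.span_le]
        rintro x ⟨y, (⟨p, rfl⟩ | ⟨a, rfl⟩), rfl⟩
        · rw [fJ]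
          exact Submodule.subset_span (Or.inl ⟨p, rfl⟩)
        · have : f (α • B a + β • P a) = k • ((1 : ℝ) • B a + (0 : ℝ) • P a) := by
            rw [map_add, map_smul, map_smul, fB, fP, hkk]
            module
          rw [this]
          exact Submodule.smul_mem _ _ (Submodule.subset_span (Or.inr ⟨a, rfl⟩))
      · rw [Submodule.span_le]
        rintro x (⟨p, rfl⟩ | ⟨a, rfl⟩)
        · exact Submodule.subset_span ⟨J p.1 p.2, Or.inl ⟨p, rfl⟩, fJ p.1 p.2⟩
        · show (1 : ℝ) • B a + (0 : ℝ) • P a ∈ _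
          have hfa : f (α • B a + β • P a) = k • B a := by
            rw [map_add, map_smul, map_smul, fB, fP, hkk]
            module
          have : (1 : ℝ) • B a + (0 : ℝ) • P a = k⁻¹ • f (α • B a + β • P a) := by
            rw [hfa]
            match_scalars <;> field_simp
          rw [this]
          exact Submodule.smul_mem _ _
            (Submodule.subset_span ⟨_, Or.inr ⟨a, rfl⟩, rfl⟩)
    exact hmap
end
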